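/- arXiv:2401.05456 — 2 statements merged into one kernel-verified Lean document; each statement's English description precedes it below -/
import Mathlib

section
/- For complex square matrices A and B and real p with 0 < p ≤ 2, one has 2^(p-1)·(‖A‖_p^p + ‖B‖_p^p) ≤ ‖A+B‖_p^p + ‖A−B‖_p^p, where ‖X‖_p = (tr|X|^p)^(1/p) is the Schatten p-(quasi)norm. -/
open scoped ComplexOrder
open Matrix Finset Filter Topology Complex

namespace ClarksonAux

set_option maxHeartbeats 1000000

set_option linter.unusedSectionVars false

variable {m : Type*} [Fintype m] [DecidableEq m]

noncomputable def evec {M : Matrix m m ℂ} (hM : M.IsHermitian) (j : m) : m → ℂ :=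
  ⇑(hM.eigenvectorBasis j)

lemma mulVec_evec {M : Matrix m m ℂ} (hM : M.IsHermitian) (j : m) :
    M *ᵥ evec hM j = (hM.eigenvalues j : ℂ) • evec hM j := by
  have h := hM.mulVec_eigenvectorBasis j
  rw [evec, h]
  ext k
  simp [Complex.real_smul]

lemma evec_ortho {M : Matrix m m ℂ} (hM : M.IsHermitian) (i j : m) :
    star (evec hM i) ⬝ᵥ evec hM j = if i = j then 1 else 0 := by
  have h := hM.eigenvectorBasis.orthonormal
  rw [orthonormal_iff_ite] at h
  have := h i j
  rw [EuclideanSpace.inner_eq_star_dotProduct, dotProduct_comm] at this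
  exact this

lemma evec_complete {M : Matrix m m ℂ} (hM : M.IsHermitian) (k l : m) :
    ∑ i, evec hM i k * (starRingEnd ℂ) (evec hM i l) = if k = l then 1 else 0 := by
  have h := (Matrix.mem_unitaryGroup_iff.mp (hM.eigenvectorUnitary).2)
  have h2 := congrFun (congrFun (congrArg (fun M : Matrix m m ℂ => (M : m → m → ℂ)) h) k) l
  simp only [Matrix.mul_apply, Matrix.one_apply] at h2
  rw [← h2]
  refine Finset.sum_congr rfl fun i _ => ?_
  simp [Matrix.star_apply, Matrix.IsHermitian.eigenvectorUnitary_apply, evec, Complex.star_def]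

lemma evec_expand {M : Matrix m m ℂ} (hM : M.IsHermitian) (x : m → ℂ) :
    ∑ i, (star (evec hM i) ⬝ᵥ x) • evec hM i = x := by
  funext k
  simp only [Finset.sum_apply, Pi.smul_apply, smul_eq_mul, dotProduct, Pi.star_apply,
    Finset.sum_mul, Complex.star_def]
  rw [Finset.sum_comm]
  calc ∑ l, ∑ i, (starRingEnd ℂ) (evec hM i l) * x l * evec hM i k
      = ∑ l, (∑ i, evec hM i k * (starRingEnd ℂ) (evec hM i l)) * x l := by
        congr 1; ext l; rw [Finset.sum_mul]; congr 1; ext i; ring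
    _ = ∑ l, (if k = l then 1 else 0) * x l := by simp_rw [evec_complete]
    _ = x k := by simp

lemma dotProduct_sum' {ι : Type*} (s : Finset ι) (v : m → ℂ) (f : ι → m → ℂ) :
    v ⬝ᵥ (∑ i ∈ s, f i) = ∑ i ∈ s, v ⬝ᵥ f i := by
  simp only [dotProduct, Finset.sum_apply, Finset.mul_sum]
  exact Finset.sum_comm

lemma mulVec_sum' {ι : Type*} (s : Finset ι) (M : Matrix m m ℂ) (f : ι → m → ℂ) :
    M *ᵥ (∑ i ∈ s, f i) = ∑ i ∈ s, M *ᵥ f i := by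
  simpa only [Matrix.mulVecLin_apply] using map_sum (Matrix.mulVecLin M) f s

lemma dot_conj (x y : m → ℂ) : star x ⬝ᵥ y = (starRingEnd ℂ) (star y ⬝ᵥ x) := by
  simp only [dotProduct, Pi.star_apply, map_sum, _root_.map_mul, Complex.star_def,
    Complex.conj_conj]
  congr 1; ext k; ring

lemma herm_swap {M : Matrix m m ℂ} (hM : M.IsHermitian) (x y : m → ℂ) :
    star x ⬝ᵥ (M *ᵥ y) = (starRingEnd ℂ) (star y ⬝ᵥ (M *ᵥ x)) := by
  rw [Matrix.dotProduct_mulVec]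
  have hsw : star x ᵥ* M = star (M *ᵥ x) := by
    rw [Matrix.star_mulVec, hM.eq]
  rw [hsw, ← dot_conj (M *ᵥ x) y, dot_conj]


lemma normSq_dot_comm (x y : m → ℂ) :
    Complex.normSq (star x ⬝ᵥ y) = Complex.normSq (star y ⬝ᵥ x) := by
  rw [dot_conj, Complex.normSq_conj]

lemma qf_eq {M : Matrix m m ℂ} (hM : M.IsHermitian) (x : m → ℂ) :
    star x ⬝ᵥ (M *ᵥ x)
      = ((∑ j, hM.eigenvalues j * Complex.normSq (star (evec hM j) ⬝ᵥ x) : ℝ) : ℂ) := by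
  have hx : M *ᵥ x = ∑ j, ((star (evec hM j) ⬝ᵥ x) * (hM.eigenvalues j : ℂ)) • evec hM j := by
    conv_lhs => rw [← evec_expand hM x]
    rw [mulVec_sum']
    refine Finset.sum_congr rfl fun j _ => ?_
    rw [Matrix.mulVec_smul, mulVec_evec, smul_smul]
  rw [hx, dotProduct_sum']
  push_cast
  refine Finset.sum_congr rfl fun j _ => ?_
  rw [dotProduct_smul, smul_eq_mul]
  have h1 : star x ⬝ᵥ evec hM j = (starRingEnd ℂ) (star (evec hM j) ⬝ᵥ x) :=
    dot_conj x (evec hM j)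
  rw [h1, ← Complex.mul_conj (star (evec hM j) ⬝ᵥ x)]
  ring

lemma sum_normSq {M : Matrix m m ℂ} (hM : M.IsHermitian) (y : m → ℂ) :
    ((∑ i, Complex.normSq (star (evec hM i) ⬝ᵥ y) : ℝ) : ℂ) = star y ⬝ᵥ y := by
  have h1 : star y ⬝ᵥ (∑ i, (star (evec hM i) ⬝ᵥ y) • evec hM i) = star y ⬝ᵥ y := by
    rw [evec_expand]
  rw [← h1, dotProduct_sum']
  push_cast
  refine Finset.sum_congr rfl fun i _ => ?_
  rw [dotProduct_smul, smul_eq_mul]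
  have h2 : star y ⬝ᵥ evec hM i = (starRingEnd ℂ) (star (evec hM i) ⬝ᵥ y) :=
    dot_conj y (evec hM i)
  rw [h2, ← Complex.mul_conj (star (evec hM i) ⬝ᵥ y)]

lemma re_qf_nonneg {M : Matrix m m ℂ} (hM : M.PosSemidef) (x : m → ℂ) :
    0 ≤ (star x ⬝ᵥ (M *ᵥ x)).re := by
  have := hM.dotProduct_mulVec_nonneg x
  rw [Complex.le_def] at this
  simpa using this.1

lemma smul_one_posSemidef {δ : ℝ} (hδ : 0 ≤ δ) :
    (((δ : ℂ)) • (1 : Matrix m m ℂ)).PosSemidef := by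
  refine Matrix.PosSemidef.of_dotProduct_mulVec_nonneg ?_ ?_
  · simp only [Matrix.IsHermitian, Matrix.conjTranspose_smul, Matrix.conjTranspose_one]
    rw [show star ((δ:ℝ):ℂ) = ((δ:ℝ):ℂ) by simp [Complex.star_def, Complex.conj_ofReal]]
  · intro x
    rw [Matrix.smul_mulVec, Matrix.one_mulVec, dotProduct_smul]
    have h1 : (0:ℂ) ≤ (δ : ℂ) := by
      rw [Complex.le_def]; constructor <;> simp [hδ]
    have h2 := dotProduct_star_self_nonneg x
    rw [smul_eq_mul]
    exact mul_nonneg h1 h2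

lemma coreδ {C E : Matrix m m ℂ} (hC : C.PosSemidef) (hE : E.PosSemidef)
    (hdom : ∀ x, (star x ⬝ᵥ (C *ᵥ x)).re ≤ (star x ⬝ᵥ (E *ᵥ x)).re)
    (j : m) {δ : ℝ} (hδ : 0 < δ) :
    ∑ i, Complex.normSq (star (evec hE.1 i) ⬝ᵥ evec hC.1 j) * (hE.1.eigenvalues i + δ)⁻¹
      ≤ (hC.1.eigenvalues j + δ)⁻¹ := by
  set c : ℝ := hC.1.eigenvalues j with hcdef
  set v : m → ℂ := evec hC.1 j with hvdef
  set e : m → ℝ := hE.1.eigenvalues with hedef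
  set u : m → m → ℂ := evec hE.1 with hudef
  have hcnn : 0 ≤ c := hC.eigenvalues_nonneg j
  have hcd : 0 < c + δ := by linarith
  have hennn : ∀ i, 0 ≤ e i := fun i => hE.eigenvalues_nonneg i
  have hne : ∀ i, e i + δ ≠ 0 := fun i => by have := hennn i; positivity
  set a : m → ℂ := fun i => star (u i) ⬝ᵥ v with hadef
  set g : ℝ := ∑ i, Complex.normSq (a i) * (e i + δ)⁻¹ with hgdef
  set u' : m → ℂ := ∑ i, ((((e i + δ)⁻¹ : ℝ) : ℂ) * a i) • u i with hu'def
  set X : Matrix m m ℂ := E + ((δ:ℝ):ℂ) • 1 with hXdef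
  set Y : Matrix m m ℂ := C + ((δ:ℝ):ℂ) • 1 with hYdef
  -- basic facts
  have hXu : ∀ i, X *ᵥ u i = (((e i + δ : ℝ)):ℂ) • u i := by
    intro i
    rw [hXdef, Matrix.add_mulVec, mulVec_evec hE.1 i, Matrix.smul_mulVec,
      Matrix.one_mulVec]
    push_cast
    rw [add_smul]
  have hXu' : X *ᵥ u' = v := by
    rw [hu'def, mulVec_sum']
    have h1 : ∀ i, X *ᵥ (((((e i + δ)⁻¹ : ℝ) : ℂ) * a i) • u i) = a i • u i := by
      intro i
      rw [Matrix.mulVec_smul, hXu i, smul_smul]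
      congr 1
      have h2 : ((e i : ℂ)) + (δ : ℂ) ≠ 0 := by exact_mod_cast hne i
      push_cast
      field_simp
    simp_rw [h1]
    exact evec_expand hE.1 v
  have hvu' : star v ⬝ᵥ u' = (g : ℂ) := by
    rw [hu'def, dotProduct_sum', hgdef]
    rw [Complex.ofReal_sum]
    refine Finset.sum_congr rfl fun i _ => ?_
    have h1 : star v ⬝ᵥ u i = (starRingEnd ℂ) (a i) := dot_conj v (u i)
    rw [dotProduct_smul, smul_eq_mul, h1, mul_assoc, Complex.mul_conj]
    push_cast
    ring
  have hu'v : star u' ⬝ᵥ v = (g : ℂ) := by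
    rw [dot_conj, hvu']
    simp [Complex.conj_ofReal]
  have hu'Xu' : star u' ⬝ᵥ (X *ᵥ u') = (g : ℂ) := by rw [hXu', hu'v]
  have hYv : Y *ᵥ v = (((c + δ : ℝ)):ℂ) • v := by
    rw [hYdef, Matrix.add_mulVec, mulVec_evec hC.1 j, Matrix.smul_mulVec,
      Matrix.one_mulVec]
    push_cast
    rw [add_smul]
  have hY1 : (((δ:ℝ):ℂ) • (1 : Matrix m m ℂ)).PosSemidef := smul_one_posSemidef hδ.le
  have hYherm : Y.IsHermitian := hC.1.add hY1.1
  have hYpsd : Y.PosSemidef := hC.add hY1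
  have hu'Yv : star u' ⬝ᵥ (Y *ᵥ v) = (((c+δ:ℝ)):ℂ) * (g:ℂ) := by
    rw [hYv, dotProduct_smul, hu'v, smul_eq_mul]
  have hvYu' : star v ⬝ᵥ (Y *ᵥ u') = (((c+δ:ℝ)):ℂ) * (g:ℂ) := by
    rw [herm_swap hYherm v u', hu'Yv]
    simp [Complex.conj_ofReal]
  have hvv : star v ⬝ᵥ v = 1 := by
    rw [hvdef]
    simpa using evec_ortho hC.1 j j
  have hvYv : star v ⬝ᵥ (Y *ᵥ v) = (((c+δ:ℝ)):ℂ) := by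
    rw [hYv, dotProduct_smul, hvv, smul_eq_mul, mul_one]
  -- expansion
  set t : ℝ := (c + δ)⁻¹ with htdef
  set w : m → ℂ := u' - ((t:ℝ):ℂ) • v with hwdef
  have expand : star w ⬝ᵥ (Y *ᵥ w)
      = star u' ⬝ᵥ (Y *ᵥ u') - (t:ℂ) * (star u' ⬝ᵥ (Y *ᵥ v))
        - (t:ℂ) * (star v ⬝ᵥ (Y *ᵥ u')) + (t:ℂ)^2 * (star v ⬝ᵥ (Y *ᵥ v)) := by
    rw [hwdef]
    rw [star_sub, star_smul]
    rw [Matrix.mulVec_sub, Matrix.mulVec_smul]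
    rw [sub_dotProduct, dotProduct_sub, dotProduct_sub]
    rw [smul_dotProduct, smul_dotProduct, dotProduct_smul,
      dotProduct_smul]
    simp only [smul_eq_mul, Complex.star_def, Complex.conj_ofReal, star_trivial]
    ring
  have expand2 : star w ⬝ᵥ (Y *ᵥ w)
      = star u' ⬝ᵥ (Y *ᵥ u') - ((2*(t*((c+δ)*g)) - t^2*(c+δ) : ℝ) : ℂ) := by
    rw [expand, hu'Yv, hvYu', hvYv]
    push_cast
    ring
  have h0 : 0 ≤ (star w ⬝ᵥ (Y *ᵥ w)).re := re_qf_nonneg hYpsd w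
  rw [expand2] at h0
  simp only [Complex.sub_re, Complex.ofReal_re] at h0
  -- bound (star u' Y u').re ≤ g
  have hYle : (star u' ⬝ᵥ (Y *ᵥ u')).re ≤ (star u' ⬝ᵥ (X *ᵥ u')).re := by
    rw [hYdef, hXdef]
    rw [Matrix.add_mulVec, Matrix.add_mulVec, dotProduct_add, dotProduct_add]
    simp only [Complex.add_re]
    exact add_le_add_left (hdom u') _
  rw [hu'Xu'] at hYle
  simp only [Complex.ofReal_re] at hYle
  -- arithmetic
  have e0 : t * (c + δ) = 1 := inv_mul_cancel₀ (ne_of_gt hcd)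
  have e1 : t * ((c+δ) * g) = g := by rw [← mul_assoc, e0, one_mul]
  have e2 : t^2 * (c+δ) = t := by rw [pow_two, mul_assoc, e0, mul_one]
  have hgt : g ≤ t := by nlinarith [h0, hYle]
  calc ∑ i, Complex.normSq (star (u i) ⬝ᵥ v) * (e i + δ)⁻¹ = g := by rw [hgdef]
    _ ≤ t := hgt
    _ = (c + δ)⁻¹ := rfl


lemma core {C E : Matrix m m ℂ} (hC : C.PosSemidef) (hE : E.PosSemidef)
    (hdom : ∀ x, (star x ⬝ᵥ (C *ᵥ x)).re ≤ (star x ⬝ᵥ (E *ᵥ x)).re)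
    (j : m) (hcj : 0 < hC.1.eigenvalues j) :
    ∑ i, Complex.normSq (star (evec hE.1 i) ⬝ᵥ evec hC.1 j) * (hE.1.eigenvalues i)⁻¹
      ≤ (hC.1.eigenvalues j)⁻¹ := by
  have hker : ∀ i, hE.1.eigenvalues i = 0 →
      Complex.normSq (star (evec hE.1 i) ⬝ᵥ evec hC.1 j) = 0 := by
    intro i hei
    have hEu : E *ᵥ evec hE.1 i = 0 := by
      rw [mulVec_evec hE.1 i, hei]; simp
    have h1 : (star (evec hE.1 i) ⬝ᵥ (C *ᵥ evec hE.1 i)).re = 0 := by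
      have hle := hdom (evec hE.1 i)
      rw [hEu] at hle
      simp only [dotProduct_zero, Complex.zero_re] at hle
      exact le_antisymm hle (re_qf_nonneg hC (evec hE.1 i))
    have h2 : star (evec hE.1 i) ⬝ᵥ (C *ᵥ evec hE.1 i) = 0 := by
      rw [qf_eq hC.1 (evec hE.1 i)] at h1 ⊢
      rw [Complex.ofReal_re] at h1
      rw [h1, Complex.ofReal_zero]
    have h3 : C *ᵥ evec hE.1 i = 0 := (hC.dotProduct_mulVec_zero_iff (evec hE.1 i)).mp h2
    have h4 : star (evec hE.1 i) ⬝ᵥ (C *ᵥ evec hC.1 j) = 0 := by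
      rw [herm_swap hC.1 (evec hE.1 i) (evec hC.1 j), h3]
      simp
    rw [mulVec_evec hC.1 j, dotProduct_smul, smul_eq_mul] at h4
    have hc0 : ((hC.1.eigenvalues j : ℝ) : ℂ) ≠ 0 := by
      exact_mod_cast ne_of_gt hcj
    have h6 : star (evec hE.1 i) ⬝ᵥ evec hC.1 j = 0 :=
      (mul_eq_zero.mp h4).resolve_left hc0
    rw [h6, Complex.normSq_zero]
  have hten : Tendsto
      (fun δ : ℝ => ∑ i, Complex.normSq (star (evec hE.1 i) ⬝ᵥ evec hC.1 j)
        * (hE.1.eigenvalues i + δ)⁻¹) (𝓝[>] 0)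
      (𝓝 (∑ i, Complex.normSq (star (evec hE.1 i) ⬝ᵥ evec hC.1 j)
        * (hE.1.eigenvalues i)⁻¹)) := by
    apply tendsto_finset_sum
    intro i _
    rcases eq_or_lt_of_le (hE.eigenvalues_nonneg i) with h|h
    · have hW := hker i h.symm
      simp only [hW, zero_mul]
      exact tendsto_const_nhds
    · have h1 : Tendsto (fun δ : ℝ => hE.1.eigenvalues i + δ) (𝓝 0)
          (𝓝 (hE.1.eigenvalues i)) := by
        simpa using tendsto_const_nhds.add (Filter.tendsto_id (x := 𝓝 (0:ℝ)))
      have h2 := ((h1.inv₀ (ne_of_gt h)).const_mul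
        (Complex.normSq (star (evec hE.1 i) ⬝ᵥ evec hC.1 j)))
      exact h2.mono_left nhdsWithin_le_nhds
  have hten2 : Tendsto (fun δ : ℝ => (hC.1.eigenvalues j + δ)⁻¹) (𝓝[>] 0)
      (𝓝 ((hC.1.eigenvalues j)⁻¹)) := by
    have h1 : Tendsto (fun δ : ℝ => hC.1.eigenvalues j + δ) (𝓝 0)
        (𝓝 (hC.1.eigenvalues j)) := by
      simpa using tendsto_const_nhds.add (Filter.tendsto_id (x := 𝓝 (0:ℝ)))
    exact (h1.inv₀ (ne_of_gt hcj)).mono_left nhdsWithin_le_nhds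
  refine le_of_tendsto_of_tendsto hten hten2 ?_
  filter_upwards [self_mem_nhdsWithin] with δ hδ
  exact coreδ hC hE hdom j hδ

lemma rpow_inv_helper {q x : ℝ} (hx : 0 < x) : x * (x⁻¹) ^ (1-q) = x ^ q := by
  rw [Real.inv_rpow hx.le, ← Real.rpow_neg hx.le]
  nth_rewrite 1 [show x = x ^ (1:ℝ) by rw [Real.rpow_one]]
  rw [← Real.rpow_add hx]
  norm_num

lemma rpow_split {q x : ℝ} (hq0 : 0 < q) (hx : 0 ≤ x) : x ^ q = (x⁻¹) ^ (1-q) * x := by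
  rcases eq_or_lt_of_le hx with h|h
  · rw [← h, Real.zero_rpow (ne_of_gt hq0), mul_zero]
  · rw [mul_comm, rpow_inv_helper h]

lemma half {q : ℝ} (hq0 : 0 < q) (hq1 : q ≤ 1) {C E : Matrix m m ℂ}
    (hC : C.PosSemidef) (hE : E.PosSemidef)
    (hdom : ∀ x, (star x ⬝ᵥ (C *ᵥ x)).re ≤ (star x ⬝ᵥ (E *ᵥ x)).re) :
    ∑ i, ((hE.1.eigenvalues i)⁻¹) ^ (1-q)
        * (∑ j, hC.1.eigenvalues j * Complex.normSq (star (evec hC.1 j) ⬝ᵥ evec hE.1 i))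
      ≤ ∑ j, (hC.1.eigenvalues j) ^ q := by
  have hswap : ∑ i, ((hE.1.eigenvalues i)⁻¹) ^ (1-q)
        * (∑ j, hC.1.eigenvalues j * Complex.normSq (star (evec hC.1 j) ⬝ᵥ evec hE.1 i))
      = ∑ j, hC.1.eigenvalues j *
          (∑ i, Complex.normSq (star (evec hE.1 i) ⬝ᵥ evec hC.1 j)
            * ((hE.1.eigenvalues i)⁻¹) ^ (1-q)) := by
    simp_rw [Finset.mul_sum]
    rw [Finset.sum_comm]
    refine Finset.sum_congr rfl fun j _ => ?_
    refine Finset.sum_congr rfl fun i _ => ?_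
    rw [normSq_dot_comm (evec hE.1 i) (evec hC.1 j)]
    ring
  rw [hswap]
  refine Finset.sum_le_sum fun j _ => ?_
  rcases eq_or_lt_of_le (hC.eigenvalues_nonneg j) with h|h
  · rw [← h, zero_mul, Real.zero_rpow (ne_of_gt hq0)]
  · have hWsum : ∑ i, Complex.normSq (star (evec hE.1 i) ⬝ᵥ evec hC.1 j) = 1 := by
      have h1 := sum_normSq hE.1 (evec hC.1 j)
      have h2 : star (evec hC.1 j) ⬝ᵥ (evec hC.1 j) = 1 := by
        simpa using evec_ortho hC.1 j j
      rw [h2] at h1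
      exact_mod_cast h1
    have hconc := Real.concaveOn_rpow (by linarith : (0:ℝ) ≤ 1 - q)
      (by linarith : (1:ℝ) - q ≤ 1)
    have hjen := hconc.le_map_sum (t := Finset.univ)
      (w := fun i => Complex.normSq (star (evec hE.1 i) ⬝ᵥ evec hC.1 j))
      (p := fun i => (hE.1.eigenvalues i)⁻¹)
      (fun i _ => Complex.normSq_nonneg _) hWsum
      (fun i _ => Set.mem_Ici.mpr (inv_nonneg.mpr (hE.eigenvalues_nonneg i)))
    simp only [smul_eq_mul] at hjen
    have hKnn : 0 ≤ ∑ i, Complex.normSq (star (evec hE.1 i) ⬝ᵥ evec hC.1 j)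
        * (hE.1.eigenvalues i)⁻¹ :=
      Finset.sum_nonneg fun i _ => mul_nonneg (Complex.normSq_nonneg _)
        (inv_nonneg.mpr (hE.eigenvalues_nonneg i))
    have hstep := Real.rpow_le_rpow hKnn (core hC hE hdom j h) (by linarith : (0:ℝ) ≤ 1 - q)
    have hR : ∑ i, Complex.normSq (star (evec hE.1 i) ⬝ᵥ evec hC.1 j)
        * ((hE.1.eigenvalues i)⁻¹) ^ (1-q) ≤ ((hC.1.eigenvalues j)⁻¹) ^ (1-q) :=
      le_trans hjen hstep
    calc hC.1.eigenvalues j * (∑ i, Complex.normSq (star (evec hE.1 i) ⬝ᵥ evec hC.1 j)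
          * ((hE.1.eigenvalues i)⁻¹) ^ (1-q))
        ≤ hC.1.eigenvalues j * ((hC.1.eigenvalues j)⁻¹) ^ (1-q) :=
          mul_le_mul_of_nonneg_left hR h.le
      _ = hC.1.eigenvalues j ^ q := rpow_inv_helper h


/-- `tr M^q` via eigenvalues, as a total function of the matrix. -/
noncomputable def trp (q : ℝ) (M : Matrix m m ℂ) : ℝ :=
  if h : M.IsHermitian then ∑ i, h.eigenvalues i ^ q else 0

lemma trp_of {q : ℝ} {M : Matrix m m ℂ} (h : M.IsHermitian) :
    trp q M = ∑ i, h.eigenvalues i ^ q := dif_pos h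

/-- diagonal entry of a hermitian matrix in the eigenbasis of another hermitian matrix -/
lemma qf_split {C D : Matrix m m ℂ} (hC : C.PosSemidef) (hD : D.PosSemidef) (i : m) :
    (hC.add hD).1.eigenvalues i
      = (∑ j, hC.1.eigenvalues j
          * Complex.normSq (star (evec hC.1 j) ⬝ᵥ evec (hC.add hD).1 i))
        + (∑ j, hD.1.eigenvalues j
          * Complex.normSq (star (evec hD.1 j) ⬝ᵥ evec (hC.add hD).1 i)) := by
  have hE : (C + D).PosSemidef := hC.add hD
  have h1 : star (evec hE.1 i) ⬝ᵥ ((C + D) *ᵥ evec hE.1 i)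
      = ((hE.1.eigenvalues i : ℝ) : ℂ) := by
    rw [mulVec_evec hE.1 i, dotProduct_smul, smul_eq_mul]
    rw [show star (evec hE.1 i) ⬝ᵥ evec hE.1 i = 1 by simpa using evec_ortho hE.1 i i,
      mul_one]
  rw [Matrix.add_mulVec, dotProduct_add, qf_eq hC.1, qf_eq hD.1] at h1
  exact_mod_cast h1.symm

lemma hdom_left {C D : Matrix m m ℂ} (hD : D.PosSemidef) :
    ∀ x, (star x ⬝ᵥ (C *ᵥ x)).re ≤ (star x ⬝ᵥ ((C + D) *ᵥ x)).re := by
  intro x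
  rw [Matrix.add_mulVec, dotProduct_add, Complex.add_re]
  have := re_qf_nonneg hD x
  linarith

lemma hdom_right {C D : Matrix m m ℂ} (hC : C.PosSemidef) :
    ∀ x, (star x ⬝ᵥ (D *ᵥ x)).re ≤ (star x ⬝ᵥ ((C + D) *ᵥ x)).re := by
  intro x
  rw [Matrix.add_mulVec, dotProduct_add, Complex.add_re]
  have := re_qf_nonneg hC x
  linarith

/-- McCarthy subadditivity: `tr (C+D)^q ≤ tr C^q + tr D^q` for `0 < q ≤ 1`. -/
lemma trp_add_le {q : ℝ} (hq0 : 0 < q) (hq1 : q ≤ 1) {C D : Matrix m m ℂ}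
    (hC : C.PosSemidef) (hD : D.PosSemidef) :
    trp q (C + D) ≤ trp q C + trp q D := by
  have hE : (C + D).PosSemidef := hC.add hD
  rw [trp_of hE.1, trp_of hC.1, trp_of hD.1]
  calc ∑ i, hE.1.eigenvalues i ^ q
      = (∑ i, ((hE.1.eigenvalues i)⁻¹) ^ (1-q)
            * (∑ j, hC.1.eigenvalues j
                * Complex.normSq (star (evec hC.1 j) ⬝ᵥ evec hE.1 i)))
        + (∑ i, ((hE.1.eigenvalues i)⁻¹) ^ (1-q)
            * (∑ j, hD.1.eigenvalues j
                * Complex.normSq (star (evec hD.1 j) ⬝ᵥ evec hE.1 i))) := by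
        rw [← Finset.sum_add_distrib]
        refine Finset.sum_congr rfl fun i _ => ?_
        rw [rpow_split hq0 (hE.eigenvalues_nonneg i), qf_split hC hD i, mul_add]
    _ ≤ _ := add_le_add (half hq0 hq1 hC hE (hdom_left hD))
        (half hq0 hq1 hD hE (hdom_right hC))

/-- pinching: `tr X^q ≤ ∑_i (diag entry)^q` in any eigenbasis. -/
lemma pinch {q : ℝ} (hq0 : 0 < q) (hq1 : q ≤ 1) {X H : Matrix m m ℂ}
    (hX : X.PosSemidef) (hH : H.IsHermitian) :
    ∑ j, hX.1.eigenvalues j ^ q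
      ≤ ∑ i, (∑ j, hX.1.eigenvalues j
          * Complex.normSq (star (evec hX.1 j) ⬝ᵥ evec hH i)) ^ q := by
  have hrow : ∀ j, ∑ i, Complex.normSq (star (evec hX.1 j) ⬝ᵥ evec hH i) = 1 := by
    intro j
    have h1 := sum_normSq hH (evec hX.1 j)
    have h2 : star (evec hX.1 j) ⬝ᵥ (evec hX.1 j) = 1 := by
      simpa using evec_ortho hX.1 j j
    rw [h2] at h1
    have h3 : (∑ i, Complex.normSq (star (evec hH i) ⬝ᵥ evec hX.1 j) : ℝ) = 1 := by
      exact_mod_cast h1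
    rw [← h3]
    exact Finset.sum_congr rfl fun i _ => normSq_dot_comm _ _
  have hcol : ∀ i, ∑ j, Complex.normSq (star (evec hX.1 j) ⬝ᵥ evec hH i) = 1 := by
    intro i
    have h1 := sum_normSq hX.1 (evec hH i)
    have h2 : star (evec hH i) ⬝ᵥ (evec hH i) = 1 := by
      simpa using evec_ortho hH i i
    rw [h2] at h1
    exact_mod_cast h1
  calc ∑ j, hX.1.eigenvalues j ^ q
      = ∑ j, (∑ i, Complex.normSq (star (evec hX.1 j) ⬝ᵥ evec hH i))
          * hX.1.eigenvalues j ^ q := by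
        refine Finset.sum_congr rfl fun j _ => ?_
        rw [hrow j, one_mul]
    _ = ∑ i, ∑ j, Complex.normSq (star (evec hX.1 j) ⬝ᵥ evec hH i)
          * hX.1.eigenvalues j ^ q := by
        simp_rw [Finset.sum_mul]
        exact Finset.sum_comm
    _ ≤ ∑ i, (∑ j, hX.1.eigenvalues j
          * Complex.normSq (star (evec hX.1 j) ⬝ᵥ evec hH i)) ^ q := by
        refine Finset.sum_le_sum fun i _ => ?_
        have hconc := Real.concaveOn_rpow hq0.le hq1
        have hjen := hconc.le_map_sum (t := Finset.univ)
          (w := fun j => Complex.normSq (star (evec hX.1 j) ⬝ᵥ evec hH i))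
          (p := fun j => hX.1.eigenvalues j)
          (fun j _ => Complex.normSq_nonneg _) (hcol i)
          (fun j _ => Set.mem_Ici.mpr (hX.eigenvalues_nonneg j))
        simp only [smul_eq_mul] at hjen
        have hcomm : (∑ j, hX.1.eigenvalues j
            * Complex.normSq (star (evec hX.1 j) ⬝ᵥ evec hH i))
            = ∑ j, Complex.normSq (star (evec hX.1 j) ⬝ᵥ evec hH i)
              * hX.1.eigenvalues j := by
          refine Finset.sum_congr rfl fun j _ => mul_comm _ _
        rw [hcomm]
        exact hjen

lemma two_point {q : ℝ} (hq0 : 0 < q) (hq1 : q ≤ 1) {a b : ℝ} (ha : 0 ≤ a) (hb : 0 ≤ b) :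
    2 ^ (q-1) * (a ^ q + b ^ q) ≤ (a + b) ^ q := by
  have hconc := Real.concaveOn_rpow hq0.le hq1
  have h := hconc.2 (Set.mem_Ici.mpr ha) (Set.mem_Ici.mpr hb)
    (by norm_num : (0:ℝ) ≤ 1/2) (by norm_num : (0:ℝ) ≤ 1/2) (by norm_num)
  simp only [smul_eq_mul] at h
  have h2 : (1/2 : ℝ) * a + (1/2 : ℝ) * b = (a+b)/2 := by ring
  rw [h2] at h
  have h3 : (a+b) ^ q = 2 ^ q * ((a+b)/2) ^ q := by
    rw [← Real.mul_rpow (by norm_num) (by positivity)]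
    congr 1
    ring
  have h4 : (2:ℝ) ^ (q-1) = 2 ^ q / 2 := by
    rw [Real.rpow_sub (by norm_num : (0:ℝ) < 2), Real.rpow_one]
  have h2q : (0:ℝ) ≤ 2 ^ q := Real.rpow_nonneg (by norm_num) q
  rw [h3, h4]
  calc 2 ^ q / 2 * (a ^ q + b ^ q) = 2 ^ q * ((1/2) * a ^ q + (1/2) * b ^ q) := by ring
    _ ≤ 2 ^ q * (((a+b)/2) ^ q) := mul_le_mul_of_nonneg_left h h2q

/-- concavity step: `2^(q-1) (tr X^q + tr Y^q) ≤ tr (X+Y)^q`. -/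
lemma trp_concat {q : ℝ} (hq0 : 0 < q) (hq1 : q ≤ 1) {X Y : Matrix m m ℂ}
    (hX : X.PosSemidef) (hY : Y.PosSemidef) :
    2 ^ (q-1) * (trp q X + trp q Y) ≤ trp q (X + Y) := by
  have hZ : (X + Y).PosSemidef := hX.add hY
  rw [trp_of hZ.1, trp_of hX.1, trp_of hY.1]
  have hxnn : ∀ i, 0 ≤ ∑ j, hX.1.eigenvalues j
      * Complex.normSq (star (evec hX.1 j) ⬝ᵥ evec hZ.1 i) :=
    fun i => Finset.sum_nonneg fun j _ =>
      mul_nonneg (hX.eigenvalues_nonneg j) (Complex.normSq_nonneg _)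
  have hynn : ∀ i, 0 ≤ ∑ j, hY.1.eigenvalues j
      * Complex.normSq (star (evec hY.1 j) ⬝ᵥ evec hZ.1 i) :=
    fun i => Finset.sum_nonneg fun j _ =>
      mul_nonneg (hY.eigenvalues_nonneg j) (Complex.normSq_nonneg _)
  calc 2 ^ (q-1) * ((∑ j, hX.1.eigenvalues j ^ q) + (∑ j, hY.1.eigenvalues j ^ q))
      ≤ 2 ^ (q-1) * ((∑ i, (∑ j, hX.1.eigenvalues j
            * Complex.normSq (star (evec hX.1 j) ⬝ᵥ evec hZ.1 i)) ^ q)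
          + (∑ i, (∑ j, hY.1.eigenvalues j
            * Complex.normSq (star (evec hY.1 j) ⬝ᵥ evec hZ.1 i)) ^ q)) := by
        apply mul_le_mul_of_nonneg_left
          (add_le_add (pinch hq0 hq1 hX hZ.1) (pinch hq0 hq1 hY hZ.1))
          (Real.rpow_nonneg (by norm_num) _)
    _ = ∑ i, 2 ^ (q-1) * ((∑ j, hX.1.eigenvalues j
            * Complex.normSq (star (evec hX.1 j) ⬝ᵥ evec hZ.1 i)) ^ q
          + (∑ j, hY.1.eigenvalues j
            * Complex.normSq (star (evec hY.1 j) ⬝ᵥ evec hZ.1 i)) ^ q) := by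
        rw [← Finset.sum_add_distrib, Finset.mul_sum]
    _ ≤ ∑ i, ((∑ j, hX.1.eigenvalues j
            * Complex.normSq (star (evec hX.1 j) ⬝ᵥ evec hZ.1 i))
          + (∑ j, hY.1.eigenvalues j
            * Complex.normSq (star (evec hY.1 j) ⬝ᵥ evec hZ.1 i))) ^ q :=
        Finset.sum_le_sum fun i _ => two_point hq0 hq1 (hxnn i) (hynn i)
    _ = ∑ i, hZ.1.eigenvalues i ^ q := by
        refine Finset.sum_congr rfl fun i _ => ?_
        rw [← qf_split hX hY i]

end ClarksonAux

/-- The Schatten `p`-(quasi)norm of a square complex matrix: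
`‖X‖_p = (tr |X|^p)^(1/p)`, computed as `(∑ i, λ_i(Xᴴ * X) ^ (p/2)) ^ (1/p)`,
where `λ_i(Xᴴ * X)` are the (nonnegative) eigenvalues of `Xᴴ * X`, whose square
roots are the singular values of `X`. -/
noncomputable def schattenNorm {m : Type*} [Fintype m] [DecidableEq m]
    (p : ℝ) (X : Matrix m m ℂ) : ℝ :=
  (∑ i, ((Matrix.posSemidef_conjTranspose_mul_self X).1.eigenvalues i ^ (p / 2))) ^ (1 / p)

theorem clarkson_first_lower {m : Type*} [Fintype m] [DecidableEq m]
    (A B : Matrix m m ℂ) (p : ℝ) (hp0 : 0 < p) (hp2 : p ≤ 2) :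
    (2 : ℝ) ^ (p - 1) * (schattenNorm p A ^ p + schattenNorm p B ^ p) ≤
      schattenNorm p (A + B) ^ p + schattenNorm p (A - B) ^ p := by
  have hq0 : 0 < p / 2 := by linarith
  have hq1 : p / 2 ≤ 1 := by linarith
  have key : ∀ X : Matrix m m ℂ, schattenNorm p X ^ p = ClarksonAux.trp (p/2) (Xᴴ * X) := by
    intro X
    rw [schattenNorm, ClarksonAux.trp_of (Matrix.posSemidef_conjTranspose_mul_self X).1]
    rw [one_div, Real.rpow_inv_rpow ?_ (ne_of_gt hp0)]
    exact Finset.sum_nonneg fun i _ => Real.rpow_nonneg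
      ((Matrix.posSemidef_conjTranspose_mul_self X).eigenvalues_nonneg i) _
  rw [key, key, key, key]
  have hP := Matrix.posSemidef_conjTranspose_mul_self A
  have hQ := Matrix.posSemidef_conjTranspose_mul_self B
  have hC' := Matrix.posSemidef_conjTranspose_mul_self (A + B)
  have hD' := Matrix.posSemidef_conjTranspose_mul_self (A - B)
  have hpar : (A + B)ᴴ * (A + B) + (A - B)ᴴ * (A - B)
      = (Aᴴ * A + Bᴴ * B) + (Aᴴ * A + Bᴴ * B) := by
    simp only [Matrix.conjTranspose_add, Matrix.conjTranspose_sub]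
    noncomm_ring
  have h1 : ClarksonAux.trp (p/2) ((A + B)ᴴ * (A + B) + (A - B)ᴴ * (A - B))
      ≤ ClarksonAux.trp (p/2) ((A + B)ᴴ * (A + B))
        + ClarksonAux.trp (p/2) ((A - B)ᴴ * (A - B)) :=
    ClarksonAux.trp_add_le hq0 hq1 hC' hD'
  rw [hpar] at h1
  have h2 : 2 ^ (p/2 - 1) * (ClarksonAux.trp (p/2) (Aᴴ * A + Bᴴ * B)
        + ClarksonAux.trp (p/2) (Aᴴ * A + Bᴴ * B))
      ≤ ClarksonAux.trp (p/2) ((Aᴴ * A + Bᴴ * B) + (Aᴴ * A + Bᴴ * B)) :=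
    ClarksonAux.trp_concat hq0 hq1 (hP.add hQ) (hP.add hQ)
  have h3 : 2 ^ (p/2 - 1) * (ClarksonAux.trp (p/2) (Aᴴ * A)
        + ClarksonAux.trp (p/2) (Bᴴ * B))
      ≤ ClarksonAux.trp (p/2) (Aᴴ * A + Bᴴ * B) :=
    ClarksonAux.trp_concat hq0 hq1 hP hQ
  have hpow : (2:ℝ) ^ (p - 1) = 2 ^ (p/2 - 1) * 2 ^ (p/2 - 1) * 2 ^ (1:ℝ) := by
    rw [← Real.rpow_add (by norm_num : (0:ℝ) < 2),
      ← Real.rpow_add (by norm_num : (0:ℝ) < 2)]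
    congr 1
    ring
  have hnn : (0:ℝ) ≤ 2 ^ (p/2 - 1) := Real.rpow_nonneg (by norm_num) _
  calc (2:ℝ) ^ (p - 1) * (ClarksonAux.trp (p/2) (Aᴴ * A) + ClarksonAux.trp (p/2) (Bᴴ * B))
      = 2 ^ (p/2 - 1) * ((2 ^ (p/2 - 1) * (ClarksonAux.trp (p/2) (Aᴴ * A)
          + ClarksonAux.trp (p/2) (Bᴴ * B)))
        + (2 ^ (p/2 - 1) * (ClarksonAux.trp (p/2) (Aᴴ * A)
          + ClarksonAux.trp (p/2) (Bᴴ * B)))) := by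
        rw [hpow, Real.rpow_one]; ring
    _ ≤ 2 ^ (p/2 - 1) * (ClarksonAux.trp (p/2) (Aᴴ * A + Bᴴ * B)
        + ClarksonAux.trp (p/2) (Aᴴ * A + Bᴴ * B)) :=
        mul_le_mul_of_nonneg_left (add_le_add h3 h3) hnn
    _ ≤ ClarksonAux.trp (p/2) ((Aᴴ * A + Bᴴ * B) + (Aᴴ * A + Bᴴ * B)) := h2
    _ ≤ ClarksonAux.trp (p/2) ((A + B)ᴴ * (A + B))
        + ClarksonAux.trp (p/2) ((A - B)ᴴ * (A - B)) := h1
end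

section
/- For complex square matrices A and B and real p with 0 < p ≤ 2, one has ‖A+B‖_p^p + ‖A−B‖_p^p ≤ 2·(‖A‖_p^p + ‖B‖_p^p). -/
open scoped ComplexOrder

set_option maxHeartbeats 1000000

open scoped ComplexOrder

namespace Clark
open Matrix
variable {m : Type*} [Fintype m] [DecidableEq m]

noncomputable def fc {A : Matrix m m ℂ} (hA : A.IsHermitian) (f : ℝ → ℝ) : Matrix m m ℂ :=
  (hA.eigenvectorUnitary : Matrix m m ℂ) * diagonal (fun i => (f (hA.eigenvalues i) : ℂ)) *
    star (hA.eigenvectorUnitary : Matrix m m ℂ)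

variable {A : Matrix m m ℂ} (hA : A.IsHermitian) (f g : ℝ → ℝ)

lemma star_mul_self_eigenvectorUnitary :
    star (hA.eigenvectorUnitary : Matrix m m ℂ) * (hA.eigenvectorUnitary : Matrix m m ℂ) = 1 :=
  Unitary.coe_star_mul_self hA.eigenvectorUnitary

lemma mul_star_self_eigenvectorUnitary :
    (hA.eigenvectorUnitary : Matrix m m ℂ) * star (hA.eigenvectorUnitary : Matrix m m ℂ) = 1 :=
  Unitary.coe_mul_star_self hA.eigenvectorUnitary

lemma fc_mul_fc : fc hA f * fc hA g = fc hA (fun t => f t * g t) := by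
  have key : ∀ X : Matrix m m ℂ, star (hA.eigenvectorUnitary : Matrix m m ℂ) *
      ((hA.eigenvectorUnitary : Matrix m m ℂ) * X) = X := fun X => by
    rw [← mul_assoc, star_mul_self_eigenvectorUnitary, one_mul]
  unfold fc
  simp only [mul_assoc, key]
  rw [← mul_assoc (diagonal _) (diagonal _) (star _), diagonal_mul_diagonal]
  norm_cast

lemma fc_congr_fun (h : ∀ i, f (hA.eigenvalues i) = g (hA.eigenvalues i)) :
    fc hA f = fc hA g := by
  have : (fun i => (f (hA.eigenvalues i) : ℂ)) = fun i => (g (hA.eigenvalues i) : ℂ) :=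
    funext fun i => by rw [h i]
  unfold fc; rw [this]

lemma fc_one : fc hA (fun _ => 1) = 1 := by
  unfold fc
  simp [diagonal_one, mul_star_self_eigenvectorUnitary hA]

lemma fc_id : fc hA (fun t => t) = A := by
  conv_rhs => rw [hA.spectral_theorem]
  rfl

lemma fc_isHermitian : (fc hA f).IsHermitian := by
  have hD : (diagonal fun i => (f (hA.eigenvalues i) : ℂ))ᴴ
      = diagonal fun i => (f (hA.eigenvalues i) : ℂ) := by
    rw [diagonal_conjTranspose, show star (fun i => (f (hA.eigenvalues i) : ℂ))
      = fun i => (f (hA.eigenvalues i) : ℂ) from funext fun i => by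
        simp [Pi.star_apply, Complex.star_def, Complex.conj_ofReal]]
  unfold fc IsHermitian
  simp only [conjTranspose_mul, conjTranspose_conjTranspose, star_eq_conjTranspose, hD, mul_assoc]


lemma fc_sub : fc hA f - fc hA g = fc hA (fun t => f t - g t) := by
  unfold fc
  rw [← sub_mul, ← mul_sub, diagonal_sub]
  norm_cast

lemma fc_trace : (fc hA f).trace = ∑ i, (f (hA.eigenvalues i) : ℂ) := by
  unfold fc
  rw [Matrix.trace_mul_comm, ← mul_assoc, star_mul_self_eigenvectorUnitary, one_mul,
    trace_diagonal]

lemma fc_qf (x : m → ℂ) :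
    star x ⬝ᵥ (fc hA f *ᵥ x) = ∑ i, (f (hA.eigenvalues i) : ℂ) *
      ((Complex.normSq ((star (hA.eigenvectorUnitary : Matrix m m ℂ) *ᵥ x) i) : ℝ) : ℂ) := by
  set U := (hA.eigenvectorUnitary : Matrix m m ℂ) with hU
  set y := star U *ᵥ x with hy
  have h1 : fc hA f *ᵥ x = U *ᵥ ((diagonal fun i => (f (hA.eigenvalues i) : ℂ)) *ᵥ y) := by
    unfold fc; rw [mulVec_mulVec, mulVec_mulVec]
  have h2 : star x ᵥ* U = star y := by
    rw [hy, star_mulVec, star_eq_conjTranspose, conjTranspose_conjTranspose]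
  rw [h1, dotProduct_mulVec, h2, dotProduct]
  refine Finset.sum_congr rfl fun i _ => ?_
  rw [mulVec_diagonal, Pi.star_apply, Complex.star_def, Complex.normSq_eq_conj_mul_self]
  ring

lemma fc_posSemidef (h : ∀ i, 0 ≤ f (hA.eigenvalues i)) : (fc hA f).PosSemidef := by
  refine Matrix.PosSemidef.of_dotProduct_mulVec_nonneg (fc_isHermitian hA f) fun x => ?_
  rw [fc_qf]
  refine Finset.sum_nonneg fun i _ => mul_nonneg ?_ ?_
  · rw [Complex.zero_le_real]; exact h i
  · rw [Complex.zero_le_real]; exact Complex.normSq_nonneg _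

lemma fc_psd_iff : (fc hA f).PosSemidef ↔ ∀ i, 0 ≤ f (hA.eigenvalues i) := by
  refine ⟨fun hpsd j => ?_, fc_posSemidef hA f⟩
  set U := (hA.eigenvectorUnitary : Matrix m m ℂ) with hU
  have key := hpsd.dotProduct_mulVec_nonneg (U *ᵥ Pi.single j 1)
  rw [fc_qf] at key
  have hy : star U *ᵥ (U *ᵥ Pi.single j 1) = Pi.single j 1 := by
    rw [mulVec_mulVec, star_mul_self_eigenvectorUnitary, one_mulVec]
  rw [hy] at key
  have : ∀ i, (f (hA.eigenvalues i) : ℂ) * ((Complex.normSq ((Pi.single j 1 : m → ℂ) i) : ℝ) : ℂ)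
      = if i = j then (f (hA.eigenvalues j) : ℂ) else 0 := by
    intro i
    rcases eq_or_ne i j with rfl | h
    · simp
    · simp [Pi.single_apply, h]
  rw [Finset.sum_congr rfl (fun i _ => this i), Finset.sum_ite_eq' Finset.univ j] at key
  simp only [Finset.mem_univ, if_true] at key
  exact_mod_cast key

lemma fc_eq_of_decomp {V : Matrix m m ℂ} (hV : V ∈ Matrix.unitaryGroup m ℂ) (δ : m → ℝ)
    (hAV : A = V * diagonal (fun i => (δ i : ℂ)) * star V) :
    fc hA f = V * diagonal (fun i => (f (δ i) : ℂ)) * star V := by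
  set U := (hA.eigenvectorUnitary : Matrix m m ℂ) with hUdef
  set Dl := diagonal (fun i => ((hA.eigenvalues i : ℝ) : ℂ)) with hDl
  set Dd := diagonal (fun i => (δ i : ℂ)) with hDd
  set S := star V * U with hS
  have hVsV : star V * V = 1 := Matrix.mem_unitaryGroup_iff'.mp hV
  have hVVs : V * star V = 1 := Matrix.mem_unitaryGroup_iff.mp hV
  have cancel : ∀ X : Matrix m m ℂ, X * star U * U = X := fun X => by
    rw [mul_assoc, star_mul_self_eigenvectorUnitary hA, mul_one]
  have hSstar : star S = star U * V := by
    rw [hS, StarMul.star_mul, star_star]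
  have hSSs : S * star S = 1 := by
    rw [hS, hSstar, mul_assoc, ← mul_assoc U, mul_star_self_eigenvectorUnitary hA, one_mul, hVsV]
  have hVS : V * S = U := by rw [hS, ← mul_assoc, hVVs, one_mul]
  have h1 : U * Dl * star U = V * Dd * star V := by
    rw [← hAV]
    exact hA.spectral_theorem.symm
  have hkey : S * Dl = Dd * S := by
    calc S * Dl = star V * (U * Dl) := by rw [hS, mul_assoc]
      _ = star V * (U * Dl * star U * U) := by rw [cancel (U * Dl)]
      _ = star V * (V * Dd * star V * U) := by rw [h1]
      _ = star V * V * Dd * (star V * U) := by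
          simp only [mul_assoc]
      _ = Dd * S := by rw [hVsV, one_mul, hS]
  have hkeyf : S * diagonal (fun i => (f (hA.eigenvalues i) : ℂ))
      = diagonal (fun i => (f (δ i) : ℂ)) * S := by
    ext i j
    have h := congrFun (congrFun hkey i) j
    rw [hS] at h ⊢
    rw [hDl, Matrix.mul_diagonal, hDd, Matrix.diagonal_mul] at h
    rw [Matrix.mul_diagonal, Matrix.diagonal_mul]
    rcases eq_or_ne ((star V * U) i j) 0 with h0 | h0
    · rw [h0, zero_mul, mul_zero]
    · have hr : hA.eigenvalues j = δ i := by
        have h2 : (star V * U) i j * (((hA.eigenvalues j : ℝ) : ℂ) - ((δ i : ℝ) : ℂ)) = 0 := by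
          linear_combination h
        rcases mul_eq_zero.mp h2 with h3 | h3
        · exact absurd h3 h0
        · have h4 := sub_eq_zero.mp h3
          exact_mod_cast h4
      rw [hr, mul_comm]
  unfold fc
  rw [← hUdef]
  calc U * diagonal (fun i => (f (hA.eigenvalues i) : ℂ)) * star U
      = V * (S * diagonal (fun i => (f (hA.eigenvalues i) : ℂ))) * (star S * star V) := by
        rw [← hVS, StarMul.star_mul]
        simp only [mul_assoc]
    _ = V * (diagonal (fun i => (f (δ i) : ℂ)) * S) * (star S * star V) := by rw [hkeyf]
    _ = V * diagonal (fun i => (f (δ i) : ℂ)) * ((S * star S) * star V) := by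
        simp only [mul_assoc]
    _ = V * diagonal (fun i => (f (δ i) : ℂ)) * star V := by rw [hSSs, one_mul]

section vec

/-- embed `m → ℂ` into Euclidean space -/
noncomputable def ev (x : m → ℂ) : EuclideanSpace ℂ m := (WithLp.equiv 2 _).symm x

/-- Euclidean norm -/
noncomputable def N (x : m → ℂ) : ℝ := ‖ev x‖

lemma N_nonneg (x : m → ℂ) : 0 ≤ N x := norm_nonneg _

lemma dot_self_eq (x : m → ℂ) : star x ⬝ᵥ x = ((N x ^ 2 : ℝ) : ℂ) := by
  rw [dotProduct_comm, ← EuclideanSpace.inner_toLp_toLp]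
  rw [show (WithLp.toLp 2 x) = ev x from rfl]
  rw [inner_self_eq_norm_sq_to_K]
  norm_cast

lemma dot_star_mulVec (K : Matrix m m ℂ) (x w : m → ℂ) :
    star (K *ᵥ x) ⬝ᵥ w = star x ⬝ᵥ (Kᴴ *ᵥ w) := by
  rw [star_mulVec, ← dotProduct_mulVec]

lemma cauchy (x y : m → ℂ) : ‖star x ⬝ᵥ y‖ ≤ N x * N y := by
  rw [dotProduct_comm]; exact norm_inner_le_norm (𝕜 := ℂ) (ev x) (ev y)

lemma sq_le_sq_iff_nonneg {a b : ℝ} (ha : 0 ≤ a) (hb : 0 ≤ b) : a ^ 2 ≤ b ^ 2 ↔ a ≤ b := by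
  constructor
  · intro h; nlinarith
  · intro h; nlinarith

/-- `K` is a contraction -/
def ctr (K : Matrix m m ℂ) : Prop := ∀ x : m → ℂ, N (K *ᵥ x) ≤ N x

lemma ctr_mul {K L : Matrix m m ℂ} (hK : ctr K) (hL : ctr L) : ctr (K * L) := fun x => by
  rw [← mulVec_mulVec]
  exact (hK _).trans (hL x)

lemma N_sq_eq_re (x : m → ℂ) : (N x) ^ 2 = (star x ⬝ᵥ x).re := by
  rw [dot_self_eq]
  exact (Complex.ofReal_re _).symm

lemma ctr_adj {K : Matrix m m ℂ} (hK : ctr K) : ctr Kᴴ := by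
  intro y
  set z := Kᴴ *ᵥ y with hz
  have h1 : (N z) ^ 2 ≤ N y * N z := by
    rw [N_sq_eq_re]
    have h2 : star z ⬝ᵥ z = star y ⬝ᵥ (K *ᵥ z) := by
      rw [hz, dot_star_mulVec, conjTranspose_conjTranspose]
    rw [h2]
    calc (star y ⬝ᵥ (K *ᵥ z)).re ≤ ‖star y ⬝ᵥ (K *ᵥ z)‖ := Complex.re_le_norm _
      _ ≤ N y * N (K *ᵥ z) := cauchy _ _
      _ ≤ N y * N z := by
          exact mul_le_mul_of_nonneg_left (hK z) (N_nonneg y)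
  rcases eq_or_lt_of_le (N_nonneg z) with h0 | h0
  · rw [← h0]; exact N_nonneg y
  · nlinarith
end vec

section pw
/-- real power of a Hermitian matrix -/
noncomputable def pw {A : Matrix m m ℂ} (hA : A.IsHermitian) (s : ℝ) : Matrix m m ℂ :=
  fc hA (fun t => t ^ s)

variable {A B : Matrix m m ℂ}

lemma pw_isHermitian (hA : A.IsHermitian) (s : ℝ) : (pw hA s).IsHermitian :=
  fc_isHermitian hA _

lemma pw_mul (hA : A.PosDef) (s t : ℝ) : pw hA.1 s * pw hA.1 t = pw hA.1 (s + t) := by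
  unfold pw
  rw [fc_mul_fc]
  exact fc_congr_fun _ _ _ fun i => (Real.rpow_add (hA.eigenvalues_pos i) s t).symm

lemma pw_zero (hA : A.IsHermitian) : pw hA 0 = 1 := by
  unfold pw
  rw [fc_congr_fun hA _ (fun _ => 1) (fun i => Real.rpow_zero _), fc_one]

lemma pw_one (hA : A.IsHermitian) : pw hA 1 = A := by
  unfold pw
  rw [fc_congr_fun hA _ (fun t => t) (fun i => Real.rpow_one _), fc_id]

lemma pw_psd (hA : A.PosSemidef) (s : ℝ) : (pw hA.1 s).PosSemidef :=
  fc_posSemidef _ _ fun i => Real.rpow_nonneg (hA.eigenvalues_nonneg i) s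

lemma qf_pw (hA : A.PosDef) (r : ℝ) (x : m → ℂ) :
    star x ⬝ᵥ (pw hA.1 r *ᵥ x) = ((N (pw hA.1 (r/2) *ᵥ x) ^ 2 : ℝ) : ℂ) := by
  have h : pw hA.1 r = pw hA.1 (r/2) * pw hA.1 (r/2) := by
    rw [pw_mul hA]; norm_num
  rw [h, ← mulVec_mulVec]
  nth_rewrite 1 [← (pw_isHermitian hA.1 (r/2)).eq]
  rw [← dot_star_mulVec, dot_self_eq]

/-- `B^r - A^r` PSD iff `A^{r/2} B^{-r/2}` is a contraction -/
lemma psd_sub_iff_ctr (hA : A.PosDef) (hB : B.PosDef) (r : ℝ) :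
    (pw hB.1 r - pw hA.1 r).PosSemidef ↔ ctr (pw hA.1 (r/2) * pw hB.1 (-(r/2))) := by
  constructor
  · intro hpsd y
    set x := pw hB.1 (-(r/2)) *ᵥ y with hx
    have h0 := hpsd.dotProduct_mulVec_nonneg x
    rw [sub_mulVec, dotProduct_sub, qf_pw hA, qf_pw hB, ← Complex.ofReal_sub,
      Complex.zero_le_real, sub_nonneg] at h0
    have hBx : pw hB.1 (r/2) *ᵥ x = y := by
      rw [hx, mulVec_mulVec, pw_mul hB]
      have he : r/2 + -(r/2) = 0 := by ring
      rw [he, pw_zero hB.1, one_mulVec]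
    rw [hBx] at h0
    rw [← mulVec_mulVec, ← hx]
    exact (sq_le_sq_iff_nonneg (N_nonneg _) (N_nonneg _)).mp h0
  · intro hctr
    refine Matrix.PosSemidef.of_dotProduct_mulVec_nonneg ((pw_isHermitian hB.1 r).sub (pw_isHermitian hA.1 r)) fun x => ?_
    rw [sub_mulVec, dotProduct_sub, qf_pw hA, qf_pw hB, ← Complex.ofReal_sub,
      Complex.zero_le_real, sub_nonneg]
    have hy := hctr (pw hB.1 (r/2) *ᵥ x)
    have hcol : (pw hA.1 (r/2) * pw hB.1 (-(r/2))) *ᵥ (pw hB.1 (r/2) *ᵥ x)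
        = pw hA.1 (r/2) *ᵥ x := by
      rw [mulVec_mulVec, mul_assoc, pw_mul hB]
      have he : -(r/2) + r/2 = 0 := by ring
      rw [he, pw_zero hB.1, mul_one]
    rw [hcol] at hy
    exact (sq_le_sq_iff_nonneg (N_nonneg _) (N_nonneg _)).mpr hy

lemma N_smul (c : ℝ) (x : m → ℂ) : N ((c : ℂ) • x) = |c| * N x := by
  unfold N
  have : ev ((c:ℂ) • x) = (c:ℂ) • ev x := rfl
  rw [this, norm_smul]
  simp

lemma N_eq_zero_iff (x : m → ℂ) : N x = 0 ↔ x = 0 := by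
  unfold N
  rw [norm_eq_zero]
  constructor
  · intro h
    have := congrArg (WithLp.equiv 2 (m → ℂ)) h
    simpa [ev] using this
  · rintro rfl; rfl

lemma dot_self_normSq (y : m → ℂ) : star y ⬝ᵥ y = ((∑ i, Complex.normSq (y i) : ℝ) : ℂ) := by
  rw [dotProduct]
  push_cast
  refine Finset.sum_congr rfl fun i _ => ?_
  rw [Pi.star_apply, Complex.star_def, Complex.normSq_eq_conj_mul_self]

lemma fc_qf_real {A : Matrix m m ℂ} (hA : A.IsHermitian) (f : ℝ → ℝ) (x : m → ℂ) :
    star x ⬝ᵥ (fc hA f *ᵥ x) = ((∑ i, f (hA.eigenvalues i) *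
      Complex.normSq ((star (hA.eigenvectorUnitary : Matrix m m ℂ) *ᵥ x) i) : ℝ) : ℂ) := by
  rw [fc_qf]
  push_cast
  rfl

/-- the key spectral bound: if `M = TᴴT` with `T` expressed by powers, eigenvalue ≤ 1 -/
lemma ctr_of_eigen_le_one {T : Matrix m m ℂ}
    (h : ∀ i, (Matrix.posSemidef_conjTranspose_mul_self T).1.eigenvalues i ≤ 1) : ctr T := by
  intro x
  set hM := Matrix.posSemidef_conjTranspose_mul_self T with hMdef
  set U := (hM.1.eigenvectorUnitary : Matrix m m ℂ) with hU
  have hqf : star x ⬝ᵥ ((Tᴴ * T) *ᵥ x) = ((∑ i, hM.1.eigenvalues i *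
      Complex.normSq ((star U *ᵥ x) i) : ℝ) : ℂ) := by
    conv_lhs => rw [← fc_id hM.1]
    exact fc_qf_real hM.1 _ x
  have hTx : star x ⬝ᵥ ((Tᴴ * T) *ᵥ x) = ((N (T *ᵥ x) ^ 2 : ℝ) : ℂ) := by
    rw [← mulVec_mulVec, ← dot_star_mulVec, dot_self_eq]
  have hxx : (N x ^ 2 : ℝ) = ∑ i, Complex.normSq ((star U *ᵥ x) i) := by
    have h1 : star x ⬝ᵥ x = star (star U *ᵥ x) ⬝ᵥ (star U *ᵥ x) := by
      rw [dot_star_mulVec, mulVec_mulVec,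
        show (star U)ᴴ = U from by rw [star_eq_conjTranspose, conjTranspose_conjTranspose],
        mul_star_self_eigenvectorUnitary hM.1, one_mulVec]
    have h2 := (dot_self_eq x).symm.trans (h1.trans (dot_self_normSq _))
    exact_mod_cast h2
  have key : N (T *ᵥ x) ^ 2 ≤ N x ^ 2 := by
    have := hTx.symm.trans hqf
    have hr : (N (T *ᵥ x) ^ 2 : ℝ) = ∑ i, hM.1.eigenvalues i *
        Complex.normSq ((star U *ᵥ x) i) := by exact_mod_cast this
    rw [hr, hxx]
    refine Finset.sum_le_sum fun i _ => ?_
    have := Complex.normSq_nonneg ((star U *ᵥ x) i)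
    nlinarith [h i, hM.eigenvalues_nonneg i]
  exact (sq_le_sq_iff_nonneg (N_nonneg _) (N_nonneg _)).mp key

lemma P_midpoint {A B : Matrix m m ℂ} (hA : A.PosDef) (hB : B.PosDef) {u v : ℝ}
    (hu : (pw hB.1 (2*u) - pw hA.1 (2*u)).PosSemidef)
    (hv : (pw hB.1 (2*v) - pw hA.1 (2*v)).PosSemidef) :
    (pw hB.1 (u+v) - pw hA.1 (u+v)).PosSemidef := by
  have hKu : ctr (pw hA.1 u * pw hB.1 (-u)) := by
    have := (psd_sub_iff_ctr hA hB (2*u)).mp hu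
    rwa [show 2*u/2 = u by ring] at this
  have hKv : ctr (pw hA.1 v * pw hB.1 (-v)) := by
    have := (psd_sub_iff_ctr hA hB (2*v)).mp hv
    rwa [show 2*v/2 = v by ring] at this
  have hL : ctr (pw hB.1 (-v) * pw hA.1 v) := by
    have := ctr_adj hKv
    rwa [conjTranspose_mul, (pw_isHermitian hA.1 v).eq, (pw_isHermitian hB.1 (-v)).eq] at this
  set w : ℝ := (u+v)/2 with hw
  set T : Matrix m m ℂ := pw hA.1 w * pw hB.1 (-w) with hT
  have hTc : Tᴴ = pw hB.1 (-w) * pw hA.1 w := by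
    rw [hT, conjTranspose_mul, (pw_isHermitian hA.1 w).eq, (pw_isHermitian hB.1 (-w)).eq]
  have hTT : Tᴴ * T = pw hB.1 (-w) * (pw hA.1 (u+v) * pw hB.1 (-w)) := by
    rw [hTc, hT, mul_assoc, ← mul_assoc (pw hA.1 w), pw_mul hA,
      show w + w = u + v by rw [hw]; ring]
  have heig : ∀ i, (Matrix.posSemidef_conjTranspose_mul_self T).1.eigenvalues i ≤ 1 := by
    intro i
    set hM := Matrix.posSemidef_conjTranspose_mul_self T with hMdef
    set d : ℝ := hM.1.eigenvalues i with hd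
    have hd0 : 0 ≤ d := hM.eigenvalues_nonneg i
    set vv : m → ℂ := ⇑(hM.1.eigenvectorBasis i) with hvv
    have hvv0 : vv ≠ 0 := by
      intro h
      refine (hM.1.eigenvectorBasis).orthonormal.ne_zero i ?_
      ext j
      exact congrFun h j
    have heq : (Tᴴ * T) *ᵥ vv = (d : ℂ) • vv := by
      have h1 := hM.1.mulVec_eigenvectorBasis i
      rw [hvv, ← hd] at *
      rw [h1]
      ext j
      simp [Complex.real_smul]
    set x : m → ℂ := pw hB.1 ((u-v)/2) *ᵥ vv with hx
    have hx0 : x ≠ 0 := by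
      intro h
      apply hvv0
      have hinv : pw hB.1 (-((u-v)/2)) *ᵥ x = vv := by
        rw [hx, mulVec_mulVec, pw_mul hB, show -((u-v)/2) + (u-v)/2 = 0 by ring,
          pw_zero hB.1, one_mulVec]
      rw [← hinv, h, mulVec_zero]
    have hcalc : (pw hB.1 (-v) * pw hA.1 v) * (pw hA.1 u * pw hB.1 (-u)) * pw hB.1 ((u-v)/2)
        = pw hB.1 ((u-v)/2) * (Tᴴ * T) := by
      calc (pw hB.1 (-v) * pw hA.1 v) * (pw hA.1 u * pw hB.1 (-u)) * pw hB.1 ((u-v)/2)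
          = pw hB.1 (-v) * ((pw hA.1 v * pw hA.1 u) * (pw hB.1 (-u) * pw hB.1 ((u-v)/2))) := by
            simp only [mul_assoc]
        _ = pw hB.1 (-v) * (pw hA.1 (u+v) * pw hB.1 (-w)) := by
            rw [pw_mul hA, pw_mul hB, show v + u = u + v by ring,
              show -u + (u-v)/2 = -w by rw [hw]; ring]
        _ = pw hB.1 ((u-v)/2) * (Tᴴ * T) := by
            rw [hTT, ← mul_assoc (pw hB.1 ((u-v)/2)), pw_mul hB,
              show (u-v)/2 + -w = -v by rw [hw]; ring]
    have hNx : ((pw hB.1 (-v) * pw hA.1 v) * (pw hA.1 u * pw hB.1 (-u))) *ᵥ x = (d:ℂ) • x := by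
      rw [hx, mulVec_mulVec, hcalc, ← mulVec_mulVec, heq, mulVec_smul]
    have hctr : ctr ((pw hB.1 (-v) * pw hA.1 v) * (pw hA.1 u * pw hB.1 (-u))) := ctr_mul hL hKu
    have hb := hctr x
    rw [hNx, N_smul] at hb
    have hNx0 : 0 < N x :=
      lt_of_le_of_ne (N_nonneg x) (fun hh => hx0 ((N_eq_zero_iff x).mp hh.symm))
    rw [abs_of_nonneg hd0] at hb
    nlinarith
  have hctrT : ctr T := ctr_of_eigen_le_one heig
  refine (psd_sub_iff_ctr hA hB (u+v)).mpr ?_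
  rw [show (u+v)/2 = w by rw [hw]]
  exact hctrT

lemma P_dyadic {A B : Matrix m m ℂ} (hA : A.PosDef) (hB : B.PosDef)
    (hAB : (B - A).PosSemidef) :
    ∀ n k : ℕ, k ≤ 2^n → (pw hB.1 ((k:ℝ)/2^n) - pw hA.1 ((k:ℝ)/2^n)).PosSemidef := by
  intro n
  induction n with
  | zero =>
    intro k hk
    interval_cases k
    · rw [show ((0:ℕ):ℝ)/2^(0:ℕ) = 0 by norm_num, pw_zero, pw_zero, sub_self]
      exact Matrix.PosSemidef.zero
    · rw [show ((1:ℕ):ℝ)/2^(0:ℕ) = 1 by norm_num, pw_one, pw_one]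
      exact hAB
  | succ n ih =>
    intro k hk
    have hp : (2:ℕ)^(n+1) = 2 * 2^n := by rw [pow_succ]; ring
    set a := k / 2 with hadef
    set b := k - a with hbdef
    have hab : a + b = k := by omega
    have ha : a ≤ 2^n := by omega
    have hb2 : b ≤ 2^n := by omega
    have h2n : ((2:ℝ))^n ≠ 0 := by positivity
    have h2u : 2 * ((a:ℝ)/2^(n+1)) = (a:ℝ)/2^n := by
      rw [pow_succ]; field_simp
    have h2v : 2 * ((b:ℝ)/2^(n+1)) = (b:ℝ)/2^n := by
      rw [pow_succ]; field_simp
    have hmid := P_midpoint hA hB (u := (a:ℝ)/2^(n+1)) (v := (b:ℝ)/2^(n+1))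
      (by rw [h2u]; exact ih a ha) (by rw [h2v]; exact ih b hb2)
    have hsum : (a:ℝ)/2^(n+1) + (b:ℝ)/2^(n+1) = (k:ℝ)/2^(n+1) := by
      rw [← add_div, ← Nat.cast_add, hab]
    rwa [hsum] at hmid

/-- Loewner–Heinz for positive definite matrices -/
lemma LH_PD {A B : Matrix m m ℂ} (hA : A.PosDef) (hB : B.PosDef) (hAB : (B-A).PosSemidef)
    {r : ℝ} (hr0 : 0 ≤ r) (hr1 : r ≤ 1) : (pw hB.1 r - pw hA.1 r).PosSemidef := by
  set q : ℕ → ℝ := fun n => ((⌊r * 2^n⌋₊ : ℕ) : ℝ)/2^n with hq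
  have h2pos : ∀ n : ℕ, (0:ℝ) < 2^n := fun n => pow_pos (by norm_num) n
  have hq_psd : ∀ n, (pw hB.1 (q n) - pw hA.1 (q n)).PosSemidef := by
    intro n
    refine P_dyadic hA hB hAB n ⌊r * 2^n⌋₊ ?_
    have hle : r * 2^n ≤ ((2^n : ℕ) : ℝ) := by
      push_cast
      nlinarith [h2pos n]
    calc ⌊r * 2^n⌋₊ ≤ ⌊((2^n : ℕ):ℝ)⌋₊ := Nat.floor_mono hle
      _ = 2^n := Nat.floor_natCast _
  have hub : ∀ n, q n ≤ r := by
    intro n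
    rw [hq]
    rw [div_le_iff₀ (h2pos n)]
    exact Nat.floor_le (by positivity)
  have hlb : ∀ n, r - 1/2^n ≤ q n := by
    intro n
    have hfl := (Nat.lt_floor_add_one (r * 2^n)).le
    have h1 : r ≤ ((⌊r * 2^n⌋₊ : ℝ) + 1)/2^n := by
      rw [le_div_iff₀ (h2pos n)]
      linarith
    have h2 : ((⌊r * 2^n⌋₊ : ℝ) + 1)/2^n = q n + 1/2^n := by
      rw [hq, ← add_div]
    rw [h2] at h1
    linarith
  have hq_tend : Filter.Tendsto q Filter.atTop (nhds r) := by
    have h0 : Filter.Tendsto (fun n : ℕ => (1:ℝ)/2^n) Filter.atTop (nhds 0) := by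
      have := tendsto_pow_atTop_nhds_zero_of_lt_one
        (by norm_num : (0:ℝ) ≤ 1/2) (by norm_num : (1/2:ℝ) < 1)
      simpa [div_pow] using this
    have hlow : Filter.Tendsto (fun n : ℕ => r - 1/2^n) Filter.atTop (nhds r) := by
      have := Filter.Tendsto.const_sub r h0
      simpa using this
    exact tendsto_of_tendsto_of_tendsto_of_le_of_le hlow tendsto_const_nhds hlb hub
  refine Matrix.PosSemidef.of_dotProduct_mulVec_nonneg ((pw_isHermitian hB.1 r).sub (pw_isHermitian hA.1 r)) fun x => ?_
  have hcont : ∀ (M : Matrix m m ℂ) (hM : M.PosDef) (c : m → ℝ), Continuous fun s : ℝ =>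
      ∑ i, hM.1.eigenvalues i ^ s * c i := by
    intro M hM c
    refine continuous_finset_sum _ fun i _ => ?_
    have hpos := hM.eigenvalues_pos i
    have hc : Continuous fun s : ℝ => hM.1.eigenvalues i ^ s :=
      (Real.continuous_exp.comp (continuous_const.mul continuous_id)).congr
        fun s => (Real.rpow_def_of_pos hpos s).symm
    exact hc.mul continuous_const
  set cA : m → ℝ := fun i =>
    Complex.normSq ((star (hA.1.eigenvectorUnitary : Matrix m m ℂ) *ᵥ x) i) with hcA
  set cB : m → ℝ := fun i =>
    Complex.normSq ((star (hB.1.eigenvectorUnitary : Matrix m m ℂ) *ᵥ x) i) with hcB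
  set FA : ℝ → ℝ := fun s => ∑ i, hA.1.eigenvalues i ^ s * cA i with hFA
  set FB : ℝ → ℝ := fun s => ∑ i, hB.1.eigenvalues i ^ s * cB i with hFB
  have hform : ∀ s : ℝ, star x ⬝ᵥ ((pw hB.1 s - pw hA.1 s) *ᵥ x) = ((FB s - FA s : ℝ) : ℂ) := by
    intro s
    rw [sub_mulVec, dotProduct_sub]
    unfold pw
    rw [fc_qf_real, fc_qf_real, ← Complex.ofReal_sub]
  have htendF : Filter.Tendsto (fun n => FB (q n) - FA (q n)) Filter.atTop
      (nhds (FB r - FA r)) := by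
    have hcF : Continuous fun s => FB s - FA s := (hcont B hB cB).sub (hcont A hA cA)
    exact (hcF.tendsto r).comp hq_tend
  have hnn : ∀ n, 0 ≤ FB (q n) - FA (q n) := by
    intro n
    have hps := (hq_psd n).dotProduct_mulVec_nonneg x
    rw [hform (q n), Complex.zero_le_real] at hps
    exact hps
  have hfin : 0 ≤ FB r - FA r := ge_of_tendsto' htendF hnn
  rw [hform r, Complex.zero_le_real]
  exact hfin

lemma fc_posDef {A : Matrix m m ℂ} (hA : A.IsHermitian) (f : ℝ → ℝ)
    (h : ∀ i, 0 < f (hA.eigenvalues i)) : (fc hA f).PosDef := by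
  refine Matrix.PosDef.of_dotProduct_mulVec_pos (fc_isHermitian hA f) fun x hx => ?_
  rw [fc_qf_real, Complex.zero_lt_real]
  set U := (hA.eigenvectorUnitary : Matrix m m ℂ) with hU
  set y := star U *ᵥ x with hy
  have hy0 : y ≠ 0 := by
    intro h0
    apply hx
    have : (U * star U) *ᵥ x = x := by
      rw [mul_star_self_eigenvectorUnitary hA, one_mulVec]
    rw [← this, ← mulVec_mulVec, ← hy, h0, mulVec_zero]
  obtain ⟨j, hj⟩ : ∃ j, y j ≠ 0 := by
    by_contra hc
    push_neg at hc
    exact hy0 (funext hc)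
  refine Finset.sum_pos' (fun i _ => mul_nonneg (le_of_lt (h i)) (Complex.normSq_nonneg _))
    ⟨j, Finset.mem_univ j, mul_pos (h j) ?_⟩
  exact Complex.normSq_pos.mpr hj

lemma pw_posDef {A : Matrix m m ℂ} (hA : A.PosDef) (s : ℝ) : (pw hA.1 s).PosDef :=
  fc_posDef hA.1 _ fun i => Real.rpow_pos_of_pos (hA.eigenvalues_pos i) s

lemma pw_pw {M : Matrix m m ℂ} (hM : M.PosDef) (t t' : ℝ) :
    pw (pw_isHermitian hM.1 t) t' = pw hM.1 (t * t') := by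
  have hdec : pw hM.1 t = (hM.1.eigenvectorUnitary : Matrix m m ℂ) *
      diagonal (fun i => ((hM.1.eigenvalues i ^ t : ℝ) : ℂ)) *
      star (hM.1.eigenvectorUnitary : Matrix m m ℂ) := rfl
  have key := fc_eq_of_decomp (hA := pw_isHermitian hM.1 t) (f := fun a => a ^ t')
    hM.1.eigenvectorUnitary.2 (fun i => hM.1.eigenvalues i ^ t) hdec
  show fc (pw_isHermitian hM.1 t) (fun a => a ^ t') = pw hM.1 (t * t')
  rw [key]
  have hfun : (fun i => ((((hM.1.eigenvalues i ^ t) ^ t') : ℝ) : ℂ))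
      = fun i => (((hM.1.eigenvalues i ^ (t * t')) : ℝ) : ℂ) := by
    funext i
    rw [← Real.rpow_mul (le_of_lt (hM.eigenvalues_pos i))]
  show ((hM.1.eigenvectorUnitary : Matrix m m ℂ) *
      diagonal (fun i => ((((hM.1.eigenvalues i ^ t) ^ t') : ℝ) : ℂ))) *
      star (hM.1.eigenvectorUnitary : Matrix m m ℂ) = _
  rw [hfun]
  rfl

lemma inv_antitone {X Y : Matrix m m ℂ} (hX : X.PosDef) (hY : Y.PosDef)
    (hXY : (Y - X).PosSemidef) : (pw hX.1 (-1) - pw hY.1 (-1)).PosSemidef := by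
  have h1 : (pw hY.1 1 - pw hX.1 1).PosSemidef := by
    rw [pw_one, pw_one]; exact hXY
  have hK : ctr (pw hX.1 (1/2) * pw hY.1 (-(1/2))) := (psd_sub_iff_ctr hX hY 1).mp h1
  have hKadj : ctr (pw hY.1 (-(1/2)) * pw hX.1 (1/2)) := by
    have := ctr_adj hK
    rwa [conjTranspose_mul, (pw_isHermitian hX.1 (1/2)).eq,
      (pw_isHermitian hY.1 (-(1/2))).eq] at this
  have hGpd : (pw hY.1 (-1)).PosDef := pw_posDef hY (-1)
  have hHpd : (pw hX.1 (-1)).PosDef := pw_posDef hX (-1)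
  have hiff := psd_sub_iff_ctr hGpd hHpd 1
  rw [pw_one, pw_one] at hiff
  refine hiff.mpr ?_
  have e1 : pw hGpd.1 ((1:ℝ)/2) = pw hY.1 (-(1/2)) := by
    have h : pw hGpd.1 ((1:ℝ)/2) = pw (pw_isHermitian hY.1 (-1)) ((1:ℝ)/2) := rfl
    rw [h, pw_pw hY, show (-1 : ℝ) * (1/2) = -(1/2) by norm_num]
  have e2 : pw hHpd.1 (-((1:ℝ)/2)) = pw hX.1 (1/2) := by
    have h : pw hHpd.1 (-((1:ℝ)/2)) = pw (pw_isHermitian hX.1 (-1)) (-((1:ℝ)/2)) := rfl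
    rw [h, pw_pw hX, show (-1 : ℝ) * -(1/2) = 1/2 by norm_num]
  rw [e1, e2]
  exact hKadj

lemma antitone_pd {P C : Matrix m m ℂ} (hP : P.PosDef) (hC : C.PosDef)
    (hPC : (C - P).PosSemidef) {s : ℝ} (hs0 : 0 < s) (hs1 : s ≤ 1) :
    (pw hP.1 (s-1) - pw hC.1 (s-1)).PosSemidef := by
  have hr := LH_PD hP hC hPC (r := 1 - s) (by linarith) (by linarith)
  have hXpd := pw_posDef hP (1-s)
  have hYpd := pw_posDef hC (1-s)
  have hres := inv_antitone hXpd hYpd hr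
  have e1 : pw hXpd.1 (-1) = pw hP.1 (s-1) := by
    have h : pw hXpd.1 (-1) = pw (pw_isHermitian hP.1 (1-s)) (-1) := rfl
    rw [h, pw_pw hP, show (1-s) * (-1) = s - 1 by ring]
  have e2 : pw hYpd.1 (-1) = pw hC.1 (s-1) := by
    have h : pw hYpd.1 (-1) = pw (pw_isHermitian hC.1 (1-s)) (-1) := rfl
    rw [h, pw_pw hC, show (1-s) * (-1) = s - 1 by ring]
  rwa [e1, e2] at hres

lemma psd_trace_nonneg {M : Matrix m m ℂ} (hM : M.PosSemidef) : 0 ≤ M.trace := by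
  rw [Matrix.trace]
  refine Finset.sum_nonneg fun i _ => ?_
  have h := hM.dotProduct_mulVec_nonneg (Pi.single i 1)
  have he : star (Pi.single i 1 : m → ℂ) ⬝ᵥ (M *ᵥ Pi.single i 1) = M.diag i := by
    simp [mulVec_single, dotProduct, Pi.single_apply, Matrix.diag, apply_ite]
  rwa [he] at h

lemma trace_pw {M : Matrix m m ℂ} (hM : M.IsHermitian) (s : ℝ) :
    (pw hM s).trace = ((∑ i, hM.eigenvalues i ^ s : ℝ) : ℂ) := by
  unfold pw
  rw [fc_trace]
  push_cast
  rfl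

lemma mccarthy_pd {P Q : Matrix m m ℂ} (hP : P.PosDef) (hQ : Q.PosDef) {s : ℝ}
    (hs0 : 0 < s) (hs1 : s ≤ 1) (hPQ : (P + Q).PosDef) :
    (∑ i, hPQ.1.eigenvalues i ^ s) ≤
      (∑ i, hP.1.eigenvalues i ^ s) + (∑ i, hQ.1.eigenvalues i ^ s) := by
  have hsplit : pw hPQ.1 s = pw hPQ.1 (s-1) * P + pw hPQ.1 (s-1) * Q := by
    rw [← mul_add]
    have h1 : pw hPQ.1 (s-1) * (P + Q) = pw hPQ.1 (s-1) * pw hPQ.1 1 := by rw [pw_one]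
    rw [h1, pw_mul hPQ, show s - 1 + 1 = s by ring]
  have bound : ∀ (P' : Matrix m m ℂ) (hP' : P'.PosDef),
      ((P + Q) - P').PosSemidef →
      (pw hPQ.1 (s-1) * P').trace ≤ ((∑ i, hP'.1.eigenvalues i ^ s : ℝ) : ℂ) := by
    intro P' hP' hsub
    set R := pw hP'.1 (1/2) with hR
    have hRR : R * R = P' := by
      rw [hR, pw_mul hP', show (1:ℝ)/2 + 1/2 = 1 by norm_num, pw_one]
    have hRh : Rᴴ = R := (pw_isHermitian hP'.1 (1/2)).eq
    have hanti := antitone_pd hP' hPQ hsub hs0 hs1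
    have hcong : (R * (pw hP'.1 (s-1) - pw hPQ.1 (s-1)) * Rᴴ).PosSemidef :=
      hanti.mul_mul_conjTranspose_same R
    have htr : 0 ≤ (R * (pw hP'.1 (s-1) - pw hPQ.1 (s-1)) * Rᴴ).trace :=
      psd_trace_nonneg hcong
    have hexp : (R * (pw hP'.1 (s-1) - pw hPQ.1 (s-1)) * Rᴴ).trace
        = (pw hP'.1 s).trace - (pw hPQ.1 (s-1) * P').trace := by
      rw [hRh, mul_sub, sub_mul, trace_sub]
      refine congrArg₂ (· - ·) ?_ ?_
      · rw [trace_mul_comm, ← mul_assoc, hRR]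
        have : P' * pw hP'.1 (s-1) = pw hP'.1 s := by
          have h2 : P' * pw hP'.1 (s-1) = pw hP'.1 1 * pw hP'.1 (s-1) := by rw [pw_one]
          rw [h2, pw_mul hP', show 1 + (s-1) = s by ring]
        rw [this]
      · rw [trace_mul_comm, ← mul_assoc, hRR, trace_mul_comm]
    rw [hexp, sub_nonneg, trace_pw] at htr
    exact htr
  have hPb := bound P hP (by simpa using hQ.posSemidef)
  have hQb := bound Q hQ (by simpa using hP.posSemidef)
  have hfin : (pw hPQ.1 s).trace ≤ ((∑ i, hP.1.eigenvalues i ^ s : ℝ) : ℂ)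
      + ((∑ i, hQ.1.eigenvalues i ^ s : ℝ) : ℂ) := by
    rw [hsplit, trace_add]
    exact add_le_add hPb hQb
  rw [trace_pw, ← Complex.ofReal_add, Complex.real_le_real] at hfin
  exact hfin

lemma eigsum_congr {X Y : Matrix m m ℂ} (h : X = Y) (hX : X.IsHermitian)
    (hY : Y.IsHermitian) (g : ℝ → ℝ) :
    ∑ i, g (hX.eigenvalues i) = ∑ i, g (hY.eigenvalues i) := by
  subst h; rfl

lemma shift_eigen_sum {M : Matrix m m ℂ} (hM : M.IsHermitian) {ε : ℝ}
    (hMε : (M + (ε:ℂ) • 1).IsHermitian) (s : ℝ) :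
    (∑ i, hMε.eigenvalues i ^ s) = ∑ i, (hM.eigenvalues i + ε) ^ s := by
  have hdec : M + (ε:ℂ) • 1 = (hM.eigenvectorUnitary : Matrix m m ℂ) *
      diagonal (fun i => ((hM.eigenvalues i + ε : ℝ) : ℂ)) *
      star (hM.eigenvectorUnitary : Matrix m m ℂ) := by
    have h1 : diagonal (fun i => ((hM.eigenvalues i + ε : ℝ) : ℂ))
        = diagonal (fun i => ((hM.eigenvalues i : ℝ) : ℂ)) + (ε:ℂ) • (1 : Matrix m m ℂ) := by
      ext i j
      rcases eq_or_ne i j with rfl | hij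
      · simp only [diagonal_apply_eq, Matrix.add_apply, Matrix.smul_apply, one_apply_eq,
          smul_eq_mul, mul_one]
        push_cast
        ring
      · simp [diagonal_apply_ne _ hij, one_apply_ne hij]
    rw [h1, mul_add, add_mul]
    congr 1
    · exact hM.spectral_theorem
    · rw [mul_smul_comm, mul_one, smul_mul_assoc, mul_star_self_eigenvectorUnitary hM]
  have h2 := fc_eq_of_decomp (hA := hMε) (f := fun t => t ^ s)
    hM.eigenvectorUnitary.2 (fun i => hM.eigenvalues i + ε) hdec
  have h3 : (pw hMε s).trace = ((∑ i, (hM.eigenvalues i + ε) ^ s : ℝ) : ℂ) := by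
    show (fc hMε (fun t => t ^ s)).trace = _
    rw [h2, trace_mul_comm, ← mul_assoc, star_mul_self_eigenvectorUnitary hM, one_mul,
      trace_diagonal]
    push_cast
    rfl
  have h4 := (trace_pw hMε s).symm.trans h3
  exact_mod_cast h4

lemma psd_shift_posDef {M : Matrix m m ℂ} (hM : M.PosSemidef) {ε : ℝ} (hε : 0 < ε) :
    (M + (ε:ℂ) • 1).PosDef := by
  refine Matrix.PosDef.of_dotProduct_mulVec_pos ?_ ?_
  · refine hM.1.add ?_
    rw [Matrix.IsHermitian, conjTranspose_smul, conjTranspose_one]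
    congr 1
    exact Complex.conj_ofReal ε
  · intro x hx
    have h1 := hM.dotProduct_mulVec_nonneg x
    have h2 : star x ⬝ᵥ (((ε:ℂ) • (1: Matrix m m ℂ)) *ᵥ x) = (ε:ℂ) * (star x ⬝ᵥ x) := by
      rw [smul_mulVec, one_mulVec, dotProduct_smul, smul_eq_mul]
    have hNx : 0 < N x :=
      lt_of_le_of_ne (N_nonneg x) (fun hh => hx ((N_eq_zero_iff x).mp hh.symm))
    have h3 : 0 < (ε:ℂ) * (star x ⬝ᵥ x) := by
      rw [dot_self_eq, ← Complex.ofReal_mul, Complex.zero_lt_real]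
      positivity
    rw [add_mulVec, dotProduct_add, h2]
    exact add_pos_of_nonneg_of_pos h1 h3

lemma mccarthy {P Q : Matrix m m ℂ} (hP : P.PosSemidef) (hQ : Q.PosSemidef) {s : ℝ}
    (hs0 : 0 < s) (hs1 : s ≤ 1) (hPQ : (P + Q).PosSemidef) :
    (∑ i, hPQ.1.eigenvalues i ^ s) ≤
      (∑ i, hP.1.eigenvalues i ^ s) + (∑ i, hQ.1.eigenvalues i ^ s) := by
  set e : ℕ → ℝ := fun n => 1/(n+1) with he
  have hepos : ∀ n, 0 < e n := fun n => by positivity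
  have key : ∀ n, (∑ i, (hPQ.1.eigenvalues i + 2 * e n) ^ s)
      ≤ (∑ i, (hP.1.eigenvalues i + e n) ^ s) + (∑ i, (hQ.1.eigenvalues i + e n) ^ s) := by
    intro n
    have hPd := psd_shift_posDef hP (hepos n)
    have hQd := psd_shift_posDef hQ (hepos n)
    have hCd := hPd.add hQd
    have hsum : (P + ((e n :ℝ):ℂ)•(1 : Matrix m m ℂ)) + (Q + ((e n:ℝ):ℂ)•1)
        = (P+Q) + ((2 * e n : ℝ):ℂ)•1 := by
      rw [show ((2 * e n : ℝ):ℂ) = ((e n:ℝ):ℂ) + ((e n:ℝ):ℂ) by push_cast; ring, add_smul]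
      abel
    have hC2 : ((P+Q) + ((2 * e n : ℝ):ℂ)•(1 : Matrix m m ℂ)).PosDef := hsum ▸ hCd
    have h1 := mccarthy_pd hPd hQd hs0 hs1 hCd
    rw [shift_eigen_sum hP.1 hPd.1 s, shift_eigen_sum hQ.1 hQd.1 s,
      eigsum_congr hsum hCd.1 hC2.1 (fun t => t ^ s),
      shift_eigen_sum hPQ.1 hC2.1 s] at h1
    exact h1
  have hlim : ∀ (c : ℝ) (k : ℝ), Filter.Tendsto (fun n => (c + k * e n) ^ s)
      Filter.atTop (nhds (c ^ s)) := by
    intro c k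
    have h0 : Filter.Tendsto (fun n : ℕ => c + k * e n) Filter.atTop (nhds c) := by
      have h1 : Filter.Tendsto (fun n : ℕ => e n) Filter.atTop (nhds 0) := by
        rw [he]
        exact tendsto_one_div_add_atTop_nhds_zero_nat
      have h2 := h1.const_mul k
      have h3 := h2.const_add c
      simpa using h3
    have hcont : ContinuousAt (fun t : ℝ => t ^ s) c :=
      Real.continuousAt_rpow_const c s (Or.inr (le_of_lt hs0))
    exact hcont.tendsto.comp h0
  have hL : Filter.Tendsto (fun n => ∑ i, (hPQ.1.eigenvalues i + 2 * e n) ^ s)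
      Filter.atTop (nhds (∑ i, hPQ.1.eigenvalues i ^ s)) := by
    refine tendsto_finset_sum _ fun i _ => ?_
    exact hlim _ 2
  have hR : Filter.Tendsto (fun n => (∑ i, (hP.1.eigenvalues i + e n) ^ s)
      + (∑ i, (hQ.1.eigenvalues i + e n) ^ s)) Filter.atTop
      (nhds ((∑ i, hP.1.eigenvalues i ^ s) + (∑ i, hQ.1.eigenvalues i ^ s))) := by
    refine Filter.Tendsto.add ?_ ?_ <;>
      refine tendsto_finset_sum _ fun i _ => ?_
    · simpa using hlim (hP.1.eigenvalues i) 1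
    · simpa using hlim (hQ.1.eigenvalues i) 1
  exact le_of_tendsto_of_tendsto' hL hR key

lemma one_le_one_div {s : ℝ} (hs0 : 0 < s) (hs1 : s ≤ 1) : 1 ≤ 1/s := by
  rw [le_div_iff₀ hs0]; linarith

lemma jensen_rpow {s : ℝ} (hs0 : 0 < s) (hs1 : s ≤ 1) (w z : m → ℝ)
    (hw : ∀ j, 0 ≤ w j) (hw1 : ∑ j, w j = 1) (hz : ∀ j, 0 ≤ z j) :
    ∑ j, w j * z j ^ s ≤ (∑ j, w j * z j) ^ s := by
  have key := Real.arith_mean_le_rpow_mean Finset.univ w (fun j => z j ^ s)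
    (fun j _ => hw j) hw1 (fun j _ => Real.rpow_nonneg (hz j) s)
    (one_le_one_div hs0 hs1)
  have hzz : ∀ j, (z j ^ s) ^ (1/s) = z j := by
    intro j
    rw [← Real.rpow_mul (hz j), mul_one_div, div_self (ne_of_gt hs0), Real.rpow_one]
  have h1 : (∑ j, w j * (z j ^ s) ^ (1/s)) = ∑ j, w j * z j := by
    refine Finset.sum_congr rfl fun j _ => ?_
    rw [hzz j]
  rw [h1, one_div_one_div] at key
  exact key

lemma two_point_concave {s : ℝ} (hs0 : 0 < s) (hs1 : s ≤ 1) {a b : ℝ}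
    (ha : 0 ≤ a) (hb : 0 ≤ b) : a ^ s + b ^ s ≤ 2 * ((a+b)/2) ^ s := by
  classical
  have key := jensen_rpow (m := Fin 2) hs0 hs1 (fun _ => 1/2) (fun j => if j = 0 then a else b)
    (fun j => by norm_num) (by simp [Fin.sum_univ_two]) (fun j => by by_cases h : j = 0 <;> simp [h, ha, hb])
  rw [Fin.sum_univ_two, Fin.sum_univ_two] at key
  simp only [if_pos, if_neg, Fin.one_eq_zero_iff] at key
  norm_num at key
  rw [show (1/2 : ℝ) * a + 1/2 * b = (a+b)/2 by ring] at key
  linarith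

lemma dot_unitary_inv {A : Matrix m m ℂ} (hA : A.IsHermitian) (z : m → ℂ) :
    star (star (hA.eigenvectorUnitary : Matrix m m ℂ) *ᵥ z) ⬝ᵥ
      (star (hA.eigenvectorUnitary : Matrix m m ℂ) *ᵥ z) = star z ⬝ᵥ z := by
  rw [dot_star_mulVec, mulVec_mulVec,
    show (star (hA.eigenvectorUnitary : Matrix m m ℂ))ᴴ
      = (hA.eigenvectorUnitary : Matrix m m ℂ) from by
        rw [star_eq_conjTranspose, conjTranspose_conjTranspose],
    mul_star_self_eigenvectorUnitary hA, one_mulVec]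

lemma dot_col_unitary {W : Matrix m m ℂ} (hW : W ∈ Matrix.unitaryGroup m ℂ) (i : m) :
    star (W *ᵥ Pi.single i 1) ⬝ᵥ (W *ᵥ Pi.single i 1) = 1 := by
  rw [dot_star_mulVec, mulVec_mulVec, show Wᴴ * W = 1 from ?_, one_mulVec]
  · simp [dotProduct, Pi.single_apply, apply_ite]
  · rw [← star_eq_conjTranspose]
    exact Matrix.mem_unitaryGroup_iff'.mp hW

lemma peierls {X : Matrix m m ℂ} (hX : X.PosSemidef) {s : ℝ} (hs0 : 0 < s) (hs1 : s ≤ 1)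
    {W : Matrix m m ℂ} (hW : W ∈ Matrix.unitaryGroup m ℂ) :
    ∑ j, hX.1.eigenvalues j ^ s ≤
      ∑ i, (star (W *ᵥ Pi.single i 1) ⬝ᵥ (X *ᵥ (W *ᵥ Pi.single i 1))).re ^ s := by
  set U := (hX.1.eigenvectorUnitary : Matrix m m ℂ) with hU
  set T : m → m → ℝ := fun i j => Complex.normSq ((star U *ᵥ (W *ᵥ Pi.single i 1)) j) with hT
  have hTnn : ∀ i j, 0 ≤ T i j := fun i j => Complex.normSq_nonneg _
  -- row sums are 1
  have hrow : ∀ i, ∑ j, T i j = 1 := by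
    intro i
    have h1 := (dot_unitary_inv hX.1 (W *ᵥ Pi.single i 1)).trans (dot_col_unitary hW i)
    rw [dot_self_normSq] at h1
    exact_mod_cast h1
  -- column sums are 1
  have hcol : ∀ j, ∑ i, T i j = 1 := by
    intro j
    set V := star U * W with hV
    have hVs : V * star V = 1 := by
      rw [hV, StarMul.star_mul, star_star, mul_assoc, ← mul_assoc W,
        show W * star W = 1 from Matrix.mem_unitaryGroup_iff.mp hW, one_mul,
        star_mul_self_eigenvectorUnitary hX.1]
    have hentry : ∀ i, T i j = Complex.normSq (V j i) := by
      intro i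
      show Complex.normSq ((star U *ᵥ (W *ᵥ Pi.single i 1)) j) = _
      rw [mulVec_mulVec, ← hV]
      congr 1
      simp [mulVec_single]
    have hdiag := congrFun (congrFun hVs j) j
    rw [Matrix.mul_apply] at hdiag
    have : (1 : Matrix m m ℂ) j j = 1 := Matrix.one_apply_eq j
    rw [this] at hdiag
    have hsum : ∑ i, ((Complex.normSq (V j i) : ℝ) : ℂ) = 1 := by
      rw [← hdiag]
      refine Finset.sum_congr rfl fun i _ => ?_
      rw [Matrix.star_apply, Complex.star_def, Complex.mul_conj]
    have hre : ∑ i, Complex.normSq (V j i) = 1 := by exact_mod_cast hsum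
    rw [Finset.sum_congr rfl fun i _ => hentry i]
    exact hre
  -- quadratic forms
  have hqf : ∀ i, (star (W *ᵥ Pi.single i 1) ⬝ᵥ (X *ᵥ (W *ᵥ Pi.single i 1))).re
      = ∑ j, T i j * hX.1.eigenvalues j := by
    intro i
    conv_lhs => rw [show X = fc hX.1 (fun t => t) from (fc_id hX.1).symm]
    rw [fc_qf_real, Complex.ofReal_re]
    exact Finset.sum_congr rfl fun j _ => by rw [mul_comm]
  calc ∑ j, hX.1.eigenvalues j ^ s
      = ∑ j, (∑ i, T i j) * hX.1.eigenvalues j ^ s := by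
        refine Finset.sum_congr rfl fun j _ => ?_
        rw [hcol j, one_mul]
    _ = ∑ i, ∑ j, T i j * hX.1.eigenvalues j ^ s := by
        rw [Finset.sum_comm]
        refine Finset.sum_congr rfl fun j _ => ?_
        rw [Finset.sum_mul]
    _ ≤ ∑ i, (∑ j, T i j * hX.1.eigenvalues j) ^ s := by
        refine Finset.sum_le_sum fun i _ => ?_
        exact jensen_rpow hs0 hs1 (T i) hX.1.eigenvalues (hTnn i) (hrow i)
          (fun j => hX.eigenvalues_nonneg j)
    _ = ∑ i, (star (W *ᵥ Pi.single i 1) ⬝ᵥ (X *ᵥ (W *ᵥ Pi.single i 1))).re ^ s := by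
        refine Finset.sum_congr rfl fun i _ => ?_
        rw [hqf i]

lemma qf_col {Z : Matrix m m ℂ} (hZ : Z.IsHermitian) (i : m) :
    star ((hZ.eigenvectorUnitary : Matrix m m ℂ) *ᵥ Pi.single i 1) ⬝ᵥ
      (Z *ᵥ ((hZ.eigenvectorUnitary : Matrix m m ℂ) *ᵥ Pi.single i 1))
      = ((hZ.eigenvalues i : ℝ) : ℂ) := by
  have hq := fc_qf_real hZ (fun t => t)
    ((hZ.eigenvectorUnitary : Matrix m m ℂ) *ᵥ Pi.single i 1)
  rw [fc_id] at hq
  rw [hq]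
  have hy : star (hZ.eigenvectorUnitary : Matrix m m ℂ) *ᵥ
      ((hZ.eigenvectorUnitary : Matrix m m ℂ) *ᵥ Pi.single i 1) = Pi.single i 1 := by
    rw [mulVec_mulVec, star_mul_self_eigenvectorUnitary, one_mulVec]
  rw [hy]
  congr 1
  have hterm : ∀ j, hZ.eigenvalues j * Complex.normSq ((Pi.single i 1 : m → ℂ) j)
      = if j = i then hZ.eigenvalues i else 0 := fun j => by
    rcases eq_or_ne j i with rfl | h
    · simp
    · simp [Pi.single_apply, h]
  rw [Finset.sum_congr rfl fun j _ => hterm j, Finset.sum_ite_eq' Finset.univ i]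
  simp

lemma lemA {X Y : Matrix m m ℂ} (hX : X.PosSemidef) (hY : Y.PosSemidef) {s : ℝ}
    (hs0 : 0 < s) (hs1 : s ≤ 1) (hZ : (X + Y).PosSemidef) :
    (∑ i, hX.1.eigenvalues i ^ s) + (∑ i, hY.1.eigenvalues i ^ s)
      ≤ 2 * ∑ i, (hZ.1.eigenvalues i / 2) ^ s := by
  have hWu : (hZ.1.eigenvectorUnitary : Matrix m m ℂ) ∈ Matrix.unitaryGroup m ℂ :=
    hZ.1.eigenvectorUnitary.2
  set W := (hZ.1.eigenvectorUnitary : Matrix m m ℂ) with hW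
  have halnn : ∀ i, 0 ≤ (star (W *ᵥ Pi.single i 1) ⬝ᵥ (X *ᵥ (W *ᵥ Pi.single i 1))).re := by
    intro i
    have h := hX.dotProduct_mulVec_nonneg (W *ᵥ Pi.single i 1)
    have := (Complex.le_def.mp h).1
    simpa using this
  have hbenn : ∀ i, 0 ≤ (star (W *ᵥ Pi.single i 1) ⬝ᵥ (Y *ᵥ (W *ᵥ Pi.single i 1))).re := by
    intro i
    have h := hY.dotProduct_mulVec_nonneg (W *ᵥ Pi.single i 1)
    have := (Complex.le_def.mp h).1
    simpa using this
  have hsum : ∀ i, (star (W *ᵥ Pi.single i 1) ⬝ᵥ (X *ᵥ (W *ᵥ Pi.single i 1))).re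
      + (star (W *ᵥ Pi.single i 1) ⬝ᵥ (Y *ᵥ (W *ᵥ Pi.single i 1))).re
      = hZ.1.eigenvalues i := by
    intro i
    have h1 := qf_col hZ.1 i
    rw [add_mulVec, dotProduct_add] at h1
    have h2 := congrArg Complex.re h1
    rw [Complex.add_re, Complex.ofReal_re] at h2
    exact h2
  calc (∑ i, hX.1.eigenvalues i ^ s) + (∑ i, hY.1.eigenvalues i ^ s)
      ≤ (∑ i, (star (W *ᵥ Pi.single i 1) ⬝ᵥ (X *ᵥ (W *ᵥ Pi.single i 1))).re ^ s)
        + ∑ i, (star (W *ᵥ Pi.single i 1) ⬝ᵥ (Y *ᵥ (W *ᵥ Pi.single i 1))).re ^ s :=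
        add_le_add (peierls hX hs0 hs1 hWu) (peierls hY hs0 hs1 hWu)
    _ = ∑ i, ((star (W *ᵥ Pi.single i 1) ⬝ᵥ (X *ᵥ (W *ᵥ Pi.single i 1))).re ^ s
        + (star (W *ᵥ Pi.single i 1) ⬝ᵥ (Y *ᵥ (W *ᵥ Pi.single i 1))).re ^ s) := by
        rw [Finset.sum_add_distrib]
    _ ≤ ∑ i, 2 * (hZ.1.eigenvalues i / 2) ^ s := by
        refine Finset.sum_le_sum fun i _ => ?_
        have := two_point_concave hs0 hs1 (halnn i) (hbenn i)
        rwa [hsum i] at this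
    _ = 2 * ∑ i, (hZ.1.eigenvalues i / 2) ^ s := by
        rw [Finset.mul_sum]

lemma smul_eigen_sum {D : Matrix m m ℂ} (hD : D.IsHermitian) {c : ℝ}
    (hcD : ((c:ℂ) • D).IsHermitian) (g : ℝ → ℝ) :
    ∑ i, g (hcD.eigenvalues i) = ∑ i, g (c * hD.eigenvalues i) := by
  have hdec : (c:ℂ) • D = (hD.eigenvectorUnitary : Matrix m m ℂ) *
      diagonal (fun i => ((c * hD.eigenvalues i : ℝ) : ℂ)) *
      star (hD.eigenvectorUnitary : Matrix m m ℂ) := by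
    have h1 : diagonal (fun i => ((c * hD.eigenvalues i : ℝ) : ℂ))
        = (c:ℂ) • diagonal (fun i => ((hD.eigenvalues i : ℝ) : ℂ)) := by
      ext i j
      rcases eq_or_ne i j with rfl | hij
      · simp only [diagonal_apply_eq, Matrix.smul_apply, smul_eq_mul]
        push_cast
        ring
      · simp [diagonal_apply_ne _ hij]
    rw [h1, Matrix.mul_smul, Matrix.smul_mul]
    congr 1
    exact hD.spectral_theorem
  have h2 := fc_eq_of_decomp (hA := hcD) (f := g)
    hD.eigenvectorUnitary.2 (fun i => c * hD.eigenvalues i) hdec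
  have h3 : (fc hcD g).trace = ((∑ i, g (c * hD.eigenvalues i) : ℝ) : ℂ) := by
    rw [h2, trace_mul_comm, ← mul_assoc, star_mul_self_eigenvectorUnitary hD, one_mul,
      trace_diagonal]
    push_cast
    rfl
  have h4 := (fc_trace hcD g).symm.trans h3
  exact_mod_cast h4

end pw
end Clark

section Final
open Matrix

lemma schatten_pow {m : Type*} [Fintype m] [DecidableEq m] {p : ℝ} (hp0 : 0 < p)
    (M : Matrix m m ℂ) :
    schattenNorm p M ^ p
      = ∑ i, (Matrix.posSemidef_conjTranspose_mul_self M).1.eigenvalues i ^ (p/2) := by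
  unfold schattenNorm
  have hS : 0 ≤ ∑ i, (Matrix.posSemidef_conjTranspose_mul_self M).1.eigenvalues i ^ (p/2) :=
    Finset.sum_nonneg fun i _ => Real.rpow_nonneg
      ((Matrix.posSemidef_conjTranspose_mul_self M).eigenvalues_nonneg i) _
  rw [← Real.rpow_mul hS, one_div_mul_cancel (ne_of_gt hp0), Real.rpow_one]

theorem clarkson_first_upper {m : Type*} [Fintype m] [DecidableEq m]
    (A B : Matrix m m ℂ) (p : ℝ) (hp0 : 0 < p) (hp2 : p ≤ 2) :
    schattenNorm p (A + B) ^ p + schattenNorm p (A - B) ^ p ≤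
      2 * (schattenNorm p A ^ p + schattenNorm p B ^ p) := by
  have hs0 : 0 < p/2 := by linarith
  have hs1 : p/2 ≤ 1 := by linarith
  have hXp := Matrix.posSemidef_conjTranspose_mul_self (A+B)
  have hYp := Matrix.posSemidef_conjTranspose_mul_self (A-B)
  have hPp := Matrix.posSemidef_conjTranspose_mul_self A
  have hQp := Matrix.posSemidef_conjTranspose_mul_self B
  rw [schatten_pow hp0, schatten_pow hp0, schatten_pow hp0, schatten_pow hp0]
  have hZ : ((A+B)ᴴ*(A+B) + (A-B)ᴴ*(A-B)).PosSemidef := hXp.add hYp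
  have hD : (Aᴴ*A + Bᴴ*B).PosSemidef := hPp.add hQp
  have hpar : (A+B)ᴴ*(A+B) + (A-B)ᴴ*(A-B) = ((2:ℝ):ℂ) • (Aᴴ*A + Bᴴ*B) := by
    simp only [Matrix.conjTranspose_add, Matrix.conjTranspose_sub]
    rw [show ((2:ℝ):ℂ) = (2:ℂ) by norm_num, two_smul]
    noncomm_ring
  have h2D : (((2:ℝ):ℂ) • (Aᴴ*A + Bᴴ*B)).PosSemidef := hpar ▸ hZ
  have step1 := Clark.lemA hXp hYp hs0 hs1 hZ
  have e1 : ∑ i, (hZ.1.eigenvalues i / 2) ^ (p/2)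
      = ∑ i, (hD.1.eigenvalues i) ^ (p/2) := by
    have ha := Clark.eigsum_congr hpar hZ.1 h2D.1 (fun t => (t/2) ^ (p/2))
    have hb := Clark.smul_eigen_sum hD.1 h2D.1 (fun t => (t/2) ^ (p/2))
    rw [ha, hb]
    refine Finset.sum_congr rfl fun i _ => ?_
    rw [show 2 * hD.1.eigenvalues i / 2 = hD.1.eigenvalues i by ring]
  have step2 := Clark.mccarthy hPp hQp hs0 hs1 hD
  rw [e1] at step1
  linarith


end Final
end
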